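/- arXiv:2008.02269 — 8 statements merged into one kernel-verified Lean document; each statement's English description precedes it below -/
import Mathlib

section
/- For every integer k ≥ 0 there is a polynomial τ of degree 2k+1 (namely τ(y) = C ∫₀^y t^k (1-t)^k dt with C = (2k+1)·binom(2k,k)) such that τ(0)=0, τ(1)=1, and for any ℓ ∈ {0,1} and any 0 ≤ Δ ≤ 1/2, |τ(y) - ℓ| ≤ (k + 1/2)·(6Δ)^k whenever |y - ℓ| ≤ Δ. -/
open Polynomial intervalIntegral MeasureTheory

/-- Formal antiderivative of a real polynomial. -/
noncomputable def pInt (p : Polynomial ℝ) : Polynomial ℝ :=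
  p.sum fun i a => Polynomial.C (a / (i + 1)) * Polynomial.X ^ (i + 1)

lemma pInt_derivative (p : Polynomial ℝ) : Polynomial.derivative (pInt p) = p := by
  unfold pInt
  rw [Polynomial.sum, map_sum]
  conv_rhs => rw [Polynomial.as_sum_support p]
  refine Finset.sum_congr rfl fun i _ => ?_
  rw [Polynomial.derivative_C_mul, Polynomial.derivative_X_pow, Nat.add_sub_cancel,
      ← mul_assoc, ← Polynomial.C_mul]
  rw [Polynomial.C_mul_X_pow_eq_monomial.symm]
  congr 1
  push_cast
  field_simp

lemma pInt_eval_zero (p : Polynomial ℝ) : (pInt p).eval 0 = 0 := by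
  simp [pInt, Polynomial.sum, Polynomial.eval_finset_sum]

lemma eval_sub_eq_integral (q : Polynomial ℝ) (a b : ℝ) :
    ∫ t in a..b, q.derivative.eval t = q.eval b - q.eval a :=
  intervalIntegral.integral_eq_sub_of_hasDerivAt (fun x _ => q.hasDerivAt x)
    ((q.derivative.continuous_aeval).intervalIntegrable _ _)

lemma beta_nat (n : ℕ) : ∀ m : ℕ, ∫ t in (0:ℝ)..1, t ^ m * (1 - t) ^ n
    = (Nat.factorial m * Nat.factorial n : ℝ) / (Nat.factorial (m + n + 1)) := by
  induction n with
  | zero =>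
    intro m
    simp only [pow_zero, mul_one, integral_pow, Nat.factorial_zero, Nat.cast_one, add_zero,
      Nat.factorial_succ]
    rw [one_pow, zero_pow (by omega)]
    push_cast
    field_simp
    norm_num
  | succ n ih =>
    intro m
    have hm : ((m : ℝ) + 1) ≠ 0 := by positivity
    have hu : ∀ x ∈ Set.uIcc (0:ℝ) 1, HasDerivAt (fun x : ℝ => (1 - x) ^ (n + 1))
        (-((n + 1 : ℝ) * (1 - x) ^ n)) x := by
      intro x _
      have h1 : HasDerivAt (fun x : ℝ => 1 - x) (-1) x := by
        simpa using (hasDerivAt_id x).const_sub 1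
      have := h1.fun_pow (n + 1)
      simpa [mul_comm, mul_assoc, mul_left_comm] using this
    have hv : ∀ x ∈ Set.uIcc (0:ℝ) 1, HasDerivAt (fun x : ℝ => x ^ (m + 1) / (m + 1))
        (x ^ m) x := by
      intro x _
      have := (hasDerivAt_pow (m + 1) x).div_const (m + 1 : ℝ)
      simpa [Nat.add_sub_cancel, mul_comm, mul_div_assoc, div_self hm] using this
    have hibp := intervalIntegral.integral_mul_deriv_eq_deriv_mul hu hv
      ((by fun_prop : Continuous fun x : ℝ => -((n + 1 : ℝ) * (1 - x) ^ n)).intervalIntegrable 0 1)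
      ((by fun_prop : Continuous fun x : ℝ => x ^ m).intervalIntegrable 0 1)
    have hcomm : (∫ t in (0:ℝ)..1, t ^ m * (1 - t) ^ (n + 1))
        = ∫ t in (0:ℝ)..1, (1 - t) ^ (n + 1) * t ^ m := by
      simp [mul_comm]
    rw [hcomm, hibp]
    have hre : (∫ x in (0:ℝ)..1, -((n + 1 : ℝ) * (1 - x) ^ n) * (x ^ (m + 1) / (m + 1)))
        = (-((n + 1 : ℝ) / (m + 1))) * ∫ x in (0:ℝ)..1, x ^ (m + 1) * (1 - x) ^ n := by
      rw [← intervalIntegral.integral_const_mul]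
      congr 1
      ext x
      ring
    rw [hre, ih (m + 1)]
    have e1 : m + 1 + n + 1 = (m + n + 1) + 1 := by omega
    have e2 : m + (n + 1) + 1 = (m + n + 1) + 1 := by omega
    rw [e1, e2, Nat.factorial_succ (m + n + 1), Nat.factorial_succ n, Nat.factorial_succ m]
    have hf1 : ((m + n + 1).factorial : ℝ) ≠ 0 := by positivity
    push_cast
    rw [one_pow, zero_pow (by omega), sub_self, zero_pow (by omega)]
    field_simp
    ring

/-- The smoothed threshold function `τ_k(y) = (2k+1)·C(2k,k)·∫₀^y t^k (1-t)^k dt`. -/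
noncomputable def tauPoly (k : ℕ) (y : ℝ) : ℝ :=
  ((2 * k + 1 : ℕ) : ℝ) * ((Nat.choose (2 * k) k : ℕ) : ℝ) *
    ∫ t in (0 : ℝ)..y, t ^ k * (1 - t) ^ k

/-- **Proposition 4.1 (polynomial approximation of the threshold function).**
For every `k ≥ 0`, `τ_k` agrees with a polynomial of degree `2k+1`, satisfies
`τ_k(0) = 0` and `τ_k(1) = 1`, and for any `ℓ ∈ {0,1}` and `0 ≤ Δ ≤ 1/2`,
`|τ_k(y) - ℓ| ≤ (k + 1/2)·(6Δ)^k` whenever `|y - ℓ| ≤ Δ`. -/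
theorem tauPoly_threshold (k : ℕ) :
    (∃ p : Polynomial ℝ, p.natDegree = 2 * k + 1 ∧ ∀ y, p.eval y = tauPoly k y) ∧
    tauPoly k 0 = 0 ∧ tauPoly k 1 = 1 ∧
    ∀ ℓ : ℝ, (ℓ = 0 ∨ ℓ = 1) → ∀ Δ : ℝ, 0 ≤ Δ → Δ ≤ 1 / 2 →
      ∀ y : ℝ, |y - ℓ| ≤ Δ →
        |tauPoly k y - ℓ| ≤ ((k : ℝ) + 1 / 2) * (6 * Δ) ^ k := by
  set cst : ℝ := ((2 * k + 1 : ℕ) : ℝ) * ((Nat.choose (2 * k) k : ℕ) : ℝ) with hcst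
  have hcstpos : (0 : ℝ) < cst := by
    apply mul_pos
    · exact_mod_cast Nat.succ_pos _
    · exact_mod_cast Nat.choose_pos (by omega : k ≤ 2 * k)
  set d : Polynomial ℝ := Polynomial.X ^ k * (1 - Polynomial.X) ^ k with hd
  have hdeval : ∀ t : ℝ, d.eval t = t ^ k * (1 - t) ^ k := by
    intro t; simp [hd]
  have hint : ∀ y : ℝ, (∫ t in (0:ℝ)..y, t ^ k * (1 - t) ^ k) = (pInt d).eval y := by
    intro y
    have h := eval_sub_eq_integral (pInt d) 0 y
    rw [pInt_derivative, pInt_eval_zero, sub_zero] at h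
    simp only [hd, Polynomial.eval_mul, Polynomial.eval_pow, Polynomial.eval_sub,
      Polynomial.eval_one, Polynomial.eval_X] at h
    exact h
  have htau : ∀ y : ℝ, tauPoly k y = cst * (pInt d).eval y := by
    intro y; rw [tauPoly, hint y]
  have htau0 : tauPoly k 0 = 0 := by rw [htau, pInt_eval_zero, mul_zero]
  -- τ(1) = 1
  have hfact : (Nat.choose (2 * k) k * Nat.factorial k * Nat.factorial k : ℕ)
      = Nat.factorial (2 * k) := by
    have h := Nat.choose_mul_factorial_mul_factorial (show k ≤ 2 * k by omega)
    simpa [show 2 * k - k = k by omega] using h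
  have htau1 : tauPoly k 1 = 1 := by
    rw [tauPoly, beta_nat k k, show k + k + 1 = 2 * k + 1 by omega,
      show 2 * k + 1 = (2 * k) + 1 from rfl, Nat.factorial_succ (2 * k)]
    have hc : (Nat.choose (2 * k) k : ℝ) * (Nat.factorial k : ℝ) * (Nat.factorial k : ℝ)
        = (Nat.factorial (2 * k) : ℝ) := by exact_mod_cast hfact
    have hf : ((2 * k).factorial : ℝ) ≠ 0 := by positivity
    push_cast
    push_cast at hc
    field_simp
    nlinarith [hc]
  -- the polynomial
  have h1X : Polynomial.natDegree (1 - Polynomial.X : Polynomial ℝ) = 1 := by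
    have e : (1 - Polynomial.X : Polynomial ℝ) = -(Polynomial.X - Polynomial.C 1) := by
      rw [Polynomial.C_1]; ring
    rw [e, Polynomial.natDegree_neg, Polynomial.natDegree_X_sub_C]
  have h1X0 : (1 - Polynomial.X : Polynomial ℝ) ≠ 0 := by
    intro h
    rw [h, Polynomial.natDegree_zero] at h1X
    exact one_ne_zero h1X.symm
  have hd0 : d ≠ 0 := by
    rw [hd]
    exact mul_ne_zero (pow_ne_zero _ Polynomial.X_ne_zero) (pow_ne_zero _ h1X0)
  have hdd : d.natDegree = 2 * k := by
    rw [hd, Polynomial.natDegree_mul (pow_ne_zero _ Polynomial.X_ne_zero)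
      (pow_ne_zero _ h1X0), Polynomial.natDegree_pow, Polynomial.natDegree_pow,
      Polynomial.natDegree_X, h1X]
    ring
  have hpd : (pInt d).natDegree = 2 * k + 1 := by
    have hder := pInt_derivative d
    have hpos : 0 < (pInt d).natDegree := by
      rcases Nat.eq_zero_or_pos (pInt d).natDegree with h0 | h
      · exfalso
        have hC := Polynomial.eq_C_of_natDegree_eq_zero h0
        rw [hC, Polynomial.derivative_C] at hder
        exact hd0 hder.symm
      · exact h
    have hdeg := Polynomial.degree_derivative_eq (pInt d) hpos
    rw [hder] at hdeg
    have := Polynomial.natDegree_eq_of_degree_eq_some hdeg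
    omega
  refine ⟨⟨Polynomial.C cst * pInt d, ?_, ?_⟩, htau0, htau1, ?_⟩
  · rw [Polynomial.natDegree_C_mul (ne_of_gt hcstpos), hpd]
  · intro y
    rw [Polynomial.eval_mul, Polynomial.eval_C, htau y]
  -- the bound
  intro ℓ hℓ Δ hΔ0 hΔ y hy
  have hcont : Continuous fun t : ℝ => t ^ k * (1 - t) ^ k := by fun_prop
  -- difference as integral from ℓ
  have hdiff : tauPoly k y - ℓ = cst * ∫ x in ℓ..y, x ^ k * (1 - x) ^ k := by
    rcases hℓ with rfl | rfl
    · rw [sub_zero, tauPoly]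
    · have hstep : tauPoly k y - 1 = tauPoly k y - tauPoly k 1 := by rw [htau1]
      rw [hstep]
      simp only [tauPoly]
      rw [← mul_sub, intervalIntegral.integral_interval_sub_left
          (hcont.intervalIntegrable 0 y) (hcont.intervalIntegrable 0 1)]
  -- pointwise bound on the integrand
  have hxd : ∀ x ∈ Set.uIoc ℓ y, |x - ℓ| ≤ Δ := by
    intro x hx
    rcases Set.mem_uIoc.mp hx with ⟨h1, h2⟩ | ⟨h1, h2⟩ <;>
      (rw [abs_le] at hy ⊢; constructor <;> linarith [hy.1, hy.2])
  have key : ∀ a b : ℝ, |a| ≤ Δ → |b| ≤ 3 / 2 → ‖a ^ k * b ^ k‖ ≤ Δ ^ k * (3 / 2 : ℝ) ^ k := by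
    intro a b ha hb
    rw [Real.norm_eq_abs, abs_mul, abs_pow, abs_pow]
    exact mul_le_mul (pow_le_pow_left₀ (abs_nonneg a) ha k)
      (pow_le_pow_left₀ (abs_nonneg b) hb k) (by positivity) (by positivity)
  have hpt : ∀ x ∈ Set.uIoc ℓ y, ‖x ^ k * (1 - x) ^ k‖ ≤ Δ ^ k * (3 / 2 : ℝ) ^ k := by
    intro x hx
    have hA := hxd x hx
    rcases hℓ with rfl | rfl
    · rw [sub_zero] at hA
      refine key x (1 - x) hA ?_
      rw [abs_le] at hA ⊢
      constructor <;> linarith [hA.1, hA.2]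
    · have hB : |1 - x| ≤ Δ := by rw [abs_sub_comm]; exact hA
      rw [mul_comm]
      refine key (1 - x) x hB ?_
      rw [abs_le] at hA ⊢
      constructor <;> linarith [hA.1, hA.2]
  have hib : ‖∫ x in ℓ..y, x ^ k * (1 - x) ^ k‖ ≤ (Δ ^ k * (3 / 2 : ℝ) ^ k) * |y - ℓ| :=
    intervalIntegral.norm_integral_le_of_norm_le_const hpt
  have habs : |tauPoly k y - ℓ| ≤ cst * ((Δ ^ k * (3 / 2 : ℝ) ^ k) * Δ) := by
    rw [hdiff, abs_mul, abs_of_pos hcstpos]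
    refine mul_le_mul_of_nonneg_left ?_ (le_of_lt hcstpos)
    calc |∫ x in ℓ..y, x ^ k * (1 - x) ^ k| ≤ (Δ ^ k * (3 / 2 : ℝ) ^ k) * |y - ℓ| := hib
      _ ≤ (Δ ^ k * (3 / 2 : ℝ) ^ k) * Δ := by
          exact mul_le_mul_of_nonneg_left hy (by positivity)
  refine habs.trans ?_
  -- final arithmetic
  have hchoose : ((Nat.choose (2 * k) k : ℕ) : ℝ) ≤ 4 ^ k := by
    have h1 : Nat.choose (2 * k) k ≤ Nat.choose (2 * k + 1) k :=
      Nat.choose_le_choose k (by omega)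
    have h2 : Nat.choose (2 * k + 1) k ≤ 4 ^ k := Nat.choose_middle_le_pow k
    calc ((Nat.choose (2 * k) k : ℕ) : ℝ) ≤ ((4 ^ k : ℕ) : ℝ) := by exact_mod_cast h1.trans h2
      _ = 4 ^ k := by push_cast; ring
  have e6 : (6 * Δ) ^ k = 4 ^ k * ((3 / 2 : ℝ) ^ k * Δ ^ k) := by
    rw [show (6 : ℝ) * Δ = 4 * ((3 / 2) * Δ) by ring, mul_pow, mul_pow]
  have h1 : ((2 * k + 1 : ℕ) : ℝ) * Δ ≤ (k : ℝ) + 1 / 2 := by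
    push_cast
    nlinarith [hΔ, (by positivity : (0:ℝ) ≤ (k : ℝ))]
  have h2 : ((Nat.choose (2 * k) k : ℕ) : ℝ) * ((3 / 2 : ℝ) ^ k * Δ ^ k)
      ≤ 4 ^ k * ((3 / 2 : ℝ) ^ k * Δ ^ k) :=
    mul_le_mul_of_nonneg_right hchoose (by positivity)
  calc cst * ((Δ ^ k * (3 / 2 : ℝ) ^ k) * Δ)
      = (((2 * k + 1 : ℕ) : ℝ) * Δ) * (((Nat.choose (2 * k) k : ℕ) : ℝ)
        * ((3 / 2 : ℝ) ^ k * Δ ^ k)) := by rw [hcst]; ring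
    _ ≤ ((k : ℝ) + 1 / 2) * (4 ^ k * ((3 / 2 : ℝ) ^ k * Δ ^ k)) := by
        refine mul_le_mul h1 h2 (by positivity) (by positivity)
    _ = ((k : ℝ) + 1 / 2) * (6 * Δ) ^ k := by rw [e6]
end

section
/- For integers d ≥ 1 and 0 ≤ h ≤ d, the number of connected multigraphs α on vertex set {1,…,n} (self-loops allowed) with exactly d edges, spanning vertex 1, and spanning exactly d+1−h vertices, is at most (d·n)^d · (d/n)^h. -/
variable {n : ℕ}

/-- Number of edges of a multigraph (with multiplicity), where the multigraph on `[n]`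
is given by edge multiplicities `α : Sym2 (Fin n) → ℕ` (self-loops allowed). -/
def mgEdges (α : Sym2 (Fin n) → ℕ) : ℕ := ∑ e, α e

/-- The set of vertices spanned by the multigraph `α`. -/
def mgVerts (α : Sym2 (Fin n) → ℕ) : Set (Fin n) := {v | ∃ e, α e ≠ 0 ∧ v ∈ e}

/-- The multigraph `α` is connected: any two spanned vertices are joined by a path of edges. -/
def mgConnected (α : Sym2 (Fin n) → ℕ) : Prop :=
  ∀ u ∈ mgVerts α, ∀ v ∈ mgVerts α,
    Relation.ReflTransGen (fun a b => α s(a, b) ≠ 0) u v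

private lemma mg_crossing {n : ℕ} (α : Sym2 (Fin n) → ℕ) {r u : Fin n} (L : List (Fin n))
    (hr : r ∈ L) (h : Relation.ReflTransGen (fun a b => α s(a, b) ≠ 0) r u) :
    u ∉ L → ∃ a ∈ L, ∃ b, b ∉ L ∧ α s(a, b) ≠ 0 := by
  induction h with
  | refl => exact fun hu => absurd hr hu
  | @tail b c h1 h2 ih =>
    intro hc
    by_cases hb : b ∈ L
    · exact ⟨b, hb, c, hc, h2⟩
    · exact ih hb

private lemma mg_explore_aux {n : ℕ} (α : Sym2 (Fin n) → ℕ) (r : Fin n)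
    (hc : mgConnected α) (hr : r ∈ mgVerts α) :
    ∀ k (L : List (Fin n)), L.Nodup → (∀ x ∈ L, x ∈ mgVerts α) → r ∈ L →
      (∀ i, 0 < i → i < L.length → ∃ j < i, α s(L.getD i r, L.getD j r) ≠ 0) →
      n - L.length ≤ k →
      ∃ L' : List (Fin n), L'.Nodup ∧ (L <+: L') ∧
        (∀ x, x ∈ L' ↔ x ∈ mgVerts α) ∧
        ∀ i, 0 < i → i < L'.length → ∃ j < i, α s(L'.getD i r, L'.getD j r) ≠ 0 := by
  intro k
  induction k with
  | zero =>
    intro L hnd hsub hrL hadj hfuel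
    by_cases hV : ∀ x ∈ mgVerts α, x ∈ L
    · exact ⟨L, hnd, List.prefix_refl L, fun x => ⟨fun hx => hsub x hx, fun hx => hV x hx⟩, hadj⟩
    · push_neg at hV
      obtain ⟨u, hu, huL⟩ := hV
      obtain ⟨a, haL, b, hbL, hab⟩ := mg_crossing α L hrL (hc r hr u hu) huL
      -- L has length < n since b ∉ L, contradiction with fuel
      exfalso
      have h1 : L.length ≤ n := by
        simpa using hnd.length_le_card
      have h2 : n ≤ L.length := by omega
      have h3 : L.toFinset.card = L.length := List.toFinset_card_of_nodup hnd
      have h4 : L.toFinset = Finset.univ := by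
        apply Finset.eq_univ_of_card
        simp [h3]; omega
      apply hbL
      have : b ∈ L.toFinset := h4 ▸ Finset.mem_univ b
      simpa using this
  | succ k ih =>
    intro L hnd hsub hrL hadj hfuel
    by_cases hV : ∀ x ∈ mgVerts α, x ∈ L
    · exact ⟨L, hnd, List.prefix_refl L, fun x => ⟨fun hx => hsub x hx, fun hx => hV x hx⟩, hadj⟩
    · push_neg at hV
      obtain ⟨u, hu, huL⟩ := hV
      obtain ⟨a, haL, b, hbL, hab⟩ := mg_crossing α L hrL (hc r hr u hu) huL
      have hbV : b ∈ mgVerts α := ⟨s(a, b), hab, Sym2.mem_mk_right a b⟩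
      have hnd' : (L ++ [b]).Nodup := by simp [List.nodup_append, hnd, hbL]; intro a ha hab; exact hbL (hab ▸ ha)
      obtain ⟨L', h1, h2, h3, h4⟩ := ih (L ++ [b]) hnd'
        (by intro x hx
            rcases List.mem_append.1 hx with hx | hx
            · exact hsub x hx
            · simp at hx; subst hx; exact hbV)
        (List.mem_append.2 (Or.inl hrL))
        (by intro i hi0 hilen
            simp only [List.length_append, List.length_singleton] at hilen
            rcases Nat.lt_or_ge i L.length with hi | hi
            · obtain ⟨j, hj, hadj'⟩ := hadj i hi0 hi
              refine ⟨j, hj, ?_⟩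
              rwa [List.getD_append _ _ _ _ hi, List.getD_append _ _ _ _ (hj.trans hi)]
            · have hieq : i = L.length := by omega
              subst hieq
              have hL0 : 0 < L.length := List.length_pos_iff.2 (List.ne_nil_of_mem hrL)
              refine ⟨L.idxOf a, List.idxOf_lt_length_iff.2 haL, ?_⟩
              have e1 : (L ++ [b]).getD L.length r = b := by
                rw [List.getD_eq_getElem _ _ (by simp)]
                exact List.getElem_concat_length rfl _
              have e2 : (L ++ [b]).getD (L.idxOf a) r = a := by
                rw [List.getD_append _ _ _ _ (List.idxOf_lt_length_iff.2 haL),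
                  List.getD_eq_getElem _ _ (List.idxOf_lt_length_iff.2 haL)]
                exact List.getElem_idxOf _
              rw [e1, e2, Sym2.eq_swap]
              exact hab)
        (by simp only [List.length_append, List.length_singleton]
            have hlen : L.length < n := by
              have h3 : L.toFinset.card = L.length := List.toFinset_card_of_nodup hnd
              by_contra hcon
              push_neg at hcon
              have : L.length ≤ n := by simpa using hnd.length_le_card
              have h4 : L.toFinset = Finset.univ := by
                apply Finset.eq_univ_of_card
                simp [h3]; omega
              apply hbL
              have : b ∈ L.toFinset := h4 ▸ Finset.mem_univ b
              simpa using this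
            omega)
      exact ⟨L', h1, (List.prefix_append L [b]).trans h2, h3, h4⟩

private lemma mg_explore {n : ℕ} (α : Sym2 (Fin n) → ℕ) (r : Fin n)
    (hc : mgConnected α) (hr : r ∈ mgVerts α) :
    ∃ L : List (Fin n), L.Nodup ∧ L.getD 0 r = r ∧ 0 < L.length ∧
      (∀ x, x ∈ L ↔ x ∈ mgVerts α) ∧
      ∀ i, 0 < i → i < L.length → ∃ j < i, α s(L.getD i r, L.getD j r) ≠ 0 := by
  obtain ⟨L', h1, h2, h3, h4⟩ := mg_explore_aux α r hc hr n [r]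
    (List.nodup_singleton r) (by simpa using hr) (List.mem_singleton_self r)
    (by intro i hi0 hilen; simp at hilen; omega) (by simp)
  obtain ⟨t, rfl⟩ := h2
  exact ⟨r :: t, h1, by simp, by simp, h3, h4⟩

private lemma multiset_card_sum' {β γ : Type*} [DecidableEq β] (s : Finset β)
    (f : β → Multiset γ) :
    Multiset.card (∑ i ∈ s, f i) = ∑ i ∈ s, Multiset.card (f i) := by
  induction s using Finset.induction with
  | empty => simp
  | insert a s hx ih => simp [Finset.sum_insert hx, ih]

private def mgM {n : ℕ} (α : Sym2 (Fin n) → ℕ) : Multiset (Sym2 (Fin n)) :=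
  ∑ e : Sym2 (Fin n), Multiset.replicate (α e) e

private lemma mgM_count {n : ℕ} (α : Sym2 (Fin n) → ℕ) (e : Sym2 (Fin n)) :
    (mgM α).count e = α e := by
  rw [mgM, Multiset.count_sum', Finset.sum_eq_single e]
  · simp
  · intro b _ hb
    simp only [Multiset.count_replicate]
    simp only [ite_eq_right_iff]
    exact fun h => absurd h (Ne.symm (by exact fun hbe => hb hbe.symm))
  · simp

private lemma mgM_card {n : ℕ} (α : Sym2 (Fin n) → ℕ) :
    Multiset.card (mgM α) = ∑ e, α e := by
  rw [mgM, multiset_card_sum']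
  simp

private def mgDecode {n : ℕ} (hn : 0 < n) (d h : ℕ)
    (c : (Fin (d - h) → Fin n × Fin d) × (Fin h → Fin d × Fin d)) :
    Sym2 (Fin n) → ℕ :=
  fun e =>
    let r : Fin n := ⟨0, hn⟩
    let L : List (Fin n) := r :: List.ofFn fun j => (c.1 j).1
    Multiset.count e
      ((↑(List.ofFn fun i : Fin (d - h) =>
          s(L.getD ((i : ℕ) + 1) r, L.getD ((c.1 i).2 : ℕ) r)) : Multiset (Sym2 (Fin n))) +
       (↑(List.ofFn fun i : Fin h =>
          s(L.getD ((c.2 i).1 : ℕ) r, L.getD ((c.2 i).2 : ℕ) r)) : Multiset (Sym2 (Fin n))))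


private lemma mg_exists_code {n : ℕ} (hn : 0 < n) (d h : ℕ) (hd : 1 ≤ d) (hh : h ≤ d)
    (α : Sym2 (Fin n) → ℕ) (he : mgEdges α = d) (hcon : mgConnected α)
    (hmem : (⟨0, hn⟩ : Fin n) ∈ mgVerts α) (hcard : (mgVerts α).ncard = d + 1 - h) :
    ∃ c : (Fin (d - h) → Fin n × Fin d) × (Fin h → Fin d × Fin d),
      α = mgDecode hn d h c := by
  classical
  obtain ⟨L, hnd, hL0, hLpos, hmemL, hadj⟩ := mg_explore α ⟨0, hn⟩ hcon hmem
  set r : Fin n := (⟨0, hn⟩ : Fin n) with hrdef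
  have hVset : mgVerts α = ↑L.toFinset := by
    ext x; simp [(hmemL x).symm]
  have hlen : L.length = d - h + 1 := by
    have h1 : (mgVerts α).ncard = L.length := by
      rw [hVset, Set.ncard_coe_finset, List.toFinset_card_of_nodup hnd]
    omega
  have hget : ∀ k (hk : k < L.length), L.getD k r = L[k]'hk :=
    fun k hk => List.getD_eq_getElem L r hk
  have hLinj : ∀ a b, a < L.length → b < L.length → L.getD a r = L.getD b r → a = b := by
    intro a b ha hb hab
    rw [hget a ha, hget b hb] at hab
    exact (hnd.getElem_inj_iff).1 hab
  have hpar : ∀ i : Fin (d - h), ∃ j, j < (i : ℕ) + 1 ∧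
      α s(L.getD ((i : ℕ) + 1) r, L.getD j r) ≠ 0 := by
    intro i
    have hi := i.isLt
    obtain ⟨j, hj1, hj2⟩ := hadj ((i : ℕ) + 1) (Nat.succ_pos _) (by omega)
    exact ⟨j, hj1, hj2⟩
  set par : Fin (d - h) → ℕ := fun i => Classical.choose (hpar i) with hpardef
  have hparlt : ∀ i : Fin (d - h), par i < (i : ℕ) + 1 :=
    fun i => (Classical.choose_spec (hpar i)).1
  have hparadj : ∀ i : Fin (d - h), α s(L.getD ((i : ℕ) + 1) r, L.getD (par i) r) ≠ 0 :=
    fun i => (Classical.choose_spec (hpar i)).2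
  set p : Fin (d - h) → Fin n := fun i => L.getD ((i : ℕ) + 1) r with hpdef
  set tl : List (Sym2 (Fin n)) :=
    List.ofFn (fun i : Fin (d - h) => s(p i, L.getD (par i) r)) with htldef
  have htlnd : tl.Nodup := by
    rw [htldef, List.nodup_ofFn]
    intro i i' hii
    have hi := i.isLt
    have hi' := i'.isLt
    simp only [hpdef, Sym2.eq_iff] at hii
    rcases hii with ⟨h1, _⟩ | ⟨h1, h2⟩
    · have := hLinj ((i : ℕ) + 1) ((i' : ℕ) + 1) (by omega) (by omega) h1
      exact Fin.ext (by omega)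
    · have hp1 := hparlt i
      have hp2 := hparlt i'
      have e1 := hLinj ((i : ℕ) + 1) (par i') (by omega) (by omega) h1
      have e2 := hLinj (par i) ((i' : ℕ) + 1) (by omega) (by omega) h2
      omega
  have hTM : (↑tl : Multiset (Sym2 (Fin n))) ≤ mgM α := by
    rw [Multiset.le_iff_count]
    intro e
    have hc1 : Multiset.count e (↑tl : Multiset (Sym2 (Fin n))) ≤ 1 :=
      Multiset.nodup_iff_count_le_one.1 (Multiset.coe_nodup.2 htlnd) e
    rcases Nat.eq_zero_or_pos (Multiset.count e (↑tl : Multiset (Sym2 (Fin n)))) with h0 | h0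
    · omega
    · have he' : e ∈ tl := by
        have := Multiset.count_pos.1 h0
        simpa using this
      rw [htldef, List.mem_ofFn] at he'
      obtain ⟨i, hi⟩ := he'
      have hα : α e ≠ 0 := by
        rw [← hi]
        exact hparadj i
      rw [mgM_count]
      omega
  have htlcard : Multiset.card (↑tl : Multiset (Sym2 (Fin n))) = d - h := by
    simp [htldef]
  set E : Multiset (Sym2 (Fin n)) := mgM α - ↑tl with hEdef
  have hMcard : Multiset.card (mgM α) = d := by rw [mgM_card]; exact he
  have hEcard : Multiset.card E = h := by
    rw [hEdef, Multiset.card_sub hTM, hMcard, htlcard]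
    omega
  set el : List (Sym2 (Fin n)) := E.toList with heldef
  have hel : el.length = h := by rw [heldef, Multiset.length_toList, hEcard]
  set c1 : Fin (d - h) → Fin n × Fin d :=
    fun i => (p i, ⟨par i % d, Nat.mod_lt _ (by omega)⟩) with hc1def
  set de : Sym2 (Fin n) := s(r, r) with hdedef
  set c2 : Fin h → Fin d × Fin d :=
    fun i => (⟨L.idxOf (el.getD (i : ℕ) de).out.1 % d, Nat.mod_lt _ (by omega)⟩,
              ⟨L.idxOf (el.getD (i : ℕ) de).out.2 % d, Nat.mod_lt _ (by omega)⟩) with hc2def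
  refine ⟨(c1, c2), ?_⟩
  have hLeq : (r :: List.ofFn fun j => (c1 j).1) = L := by
    symm
    apply List.ext_getElem (by simp [hlen])
    intro k h1 h2
    match k with
    | 0 =>
      simp only [List.getElem_cons_zero]
      rw [← hget 0 hLpos]
      exact hL0
    | Nat.succ k =>
      simp only [List.getElem_cons_succ]
      rw [List.getElem_ofFn]
      exact (hget (k + 1) h1).symm
  -- the tree part of the decoder is tl
  have hT' : (List.ofFn fun i : Fin (d - h) =>
      s((r :: List.ofFn fun j => (c1 j).1).getD ((i : ℕ) + 1) r,
        (r :: List.ofFn fun j => (c1 j).1).getD (((c1 i).2 : ℕ)) r)) = tl := by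
    rw [hLeq, htldef]
    apply congrArg List.ofFn
    funext i
    have hm : (((c1 i).2 : ℕ)) = par i := by
      show par i % d = par i
      have h1 := hparlt i
      have h2 := i.isLt
      exact Nat.mod_eq_of_lt (by omega)
    rw [hm]
  -- the excess part of the decoder is el
  have hidx : ∀ a : Fin n, a ∈ L → 1 ≤ h → L.getD (L.idxOf a % d) r = a := by
    intro a haL hpos
    have hia : L.idxOf a < L.length := List.idxOf_lt_length_iff.2 haL
    have hlt : L.idxOf a < d := by
      rw [hlen] at hia
      omega
    rw [Nat.mod_eq_of_lt hlt, hget _ hia]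
    exact List.getElem_idxOf hia
  have hE' : (List.ofFn fun i : Fin h =>
      s((r :: List.ofFn fun j => (c1 j).1).getD (((c2 i).1 : ℕ)) r,
        (r :: List.ofFn fun j => (c1 j).1).getD (((c2 i).2 : ℕ)) r)) = el := by
    rw [hLeq]
    apply List.ext_getElem (by simp [hel])
    intro k h1 h2
    rw [List.getElem_ofFn]
    have hkh : k < h := by simpa using h1
    have hkel : k < el.length := by omega
    have hxE : el[k]'hkel ∈ E := Multiset.mem_toList.1 (List.getElem_mem hkel)
    have hαx : α (el[k]'hkel) ≠ 0 := by
      have h3 : 0 < Multiset.count (el[k]'hkel) E := Multiset.count_pos.2 hxE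
      have h4 : Multiset.count (el[k]'hkel) E ≤ Multiset.count (el[k]'hkel) (mgM α) :=
        Multiset.count_le_of_le _ (by rw [hEdef]; exact tsub_le_self)
      rw [mgM_count] at h4
      omega
    have hx1L : (el[k]'hkel).out.1 ∈ L := (hmemL _).2 ⟨_, hαx, Sym2.out_fst_mem _⟩
    have hx2L : (el[k]'hkel).out.2 ∈ L := (hmemL _).2 ⟨_, hαx, Sym2.out_snd_mem _⟩
    have hgetel : el.getD k de = el[k]'hkel := List.getD_eq_getElem el de hkel
    show s(L.getD (L.idxOf ((el.getD k de).out.1) % d) r,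
           L.getD (L.idxOf ((el.getD k de).out.2) % d) r) = el[k]'h2
    rw [hgetel, hidx _ hx1L (by omega), hidx _ hx2L (by omega)]
    exact Quot.out_eq _
  funext e
  show α e = Multiset.count e
      ((↑(List.ofFn fun i : Fin (d - h) =>
          s((r :: List.ofFn fun j => (c1 j).1).getD ((i : ℕ) + 1) r,
            (r :: List.ofFn fun j => (c1 j).1).getD (((c1 i).2 : ℕ)) r)) : Multiset (Sym2 (Fin n))) +
       (↑(List.ofFn fun i : Fin h =>
          s((r :: List.ofFn fun j => (c1 j).1).getD (((c2 i).1 : ℕ)) r,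
            (r :: List.ofFn fun j => (c1 j).1).getD (((c2 i).2 : ℕ)) r)) : Multiset (Sym2 (Fin n))))
  rw [hT', hE', heldef, Multiset.coe_toList, Multiset.count_add]
  have h1 : Multiset.count e E = Multiset.count e (mgM α) - Multiset.count e (↑tl) := by
    rw [hEdef, Multiset.count_sub]
  have h2 := Multiset.count_le_of_le e hTM
  rw [mgM_count] at h1 h2
  omega

private lemma mg_arith (n d h : ℕ) (hn : 0 < n) (hd : 1 ≤ d) (hh : h ≤ d) :
    (((n * d) ^ (d - h) * (d * d) ^ h : ℕ) : ℝ) ≤ ((d : ℝ) * n) ^ d * ((d : ℝ) / n) ^ h := by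
  have hn' : (0 : ℝ) < n := by exact_mod_cast hn
  obtain ⟨k, hk⟩ : ∃ k, d = k + h := ⟨d - h, by omega⟩
  have hkd : d - h = k := by omega
  rw [hkd]
  push_cast
  rw [show ((d : ℝ) * n) ^ d = ((d : ℝ) * n) ^ k * ((d : ℝ) * n) ^ h by
    rw [← pow_add, ← hk]]
  rw [div_pow]
  apply le_of_eq
  field_simp
  ring


/-- **Lemma 3.5 (counting connected multigraphs).** For `d ≥ 1` and `0 ≤ h ≤ d`, the number
of connected multigraphs on `[n]` with `d` edges, spanning vertex `1`, and spanning exactly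
`d+1−h` vertices, is at most `(d·n)^d·(d/n)^h`. -/
theorem count_connected_multigraphs {n : ℕ} (hn : 0 < n) (d h : ℕ) (hd : 1 ≤ d)
    (hh : h ≤ d) :
    ((Set.ncard {α : Sym2 (Fin n) → ℕ |
        mgEdges α = d ∧ mgConnected α ∧ (⟨0, hn⟩ : Fin n) ∈ mgVerts α ∧
        (mgVerts α).ncard = d + 1 - h} : ℕ) : ℝ)
      ≤ ((d : ℝ) * n) ^ d * ((d : ℝ) / n) ^ h := by
  classical
  set S := {α : Sym2 (Fin n) → ℕ |
      mgEdges α = d ∧ mgConnected α ∧ (⟨0, hn⟩ : Fin n) ∈ mgVerts α ∧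
      (mgVerts α).ncard = d + 1 - h} with hSdef
  have key : ∀ x : S, ∃ c : (Fin (d - h) → Fin n × Fin d) × (Fin h → Fin d × Fin d),
      (x : Sym2 (Fin n) → ℕ) = mgDecode hn d h c := fun x =>
    mg_exists_code hn d h hd hh x.1 x.2.1 x.2.2.1 x.2.2.2.1 x.2.2.2.2
  set f : S → (Fin (d - h) → Fin n × Fin d) × (Fin h → Fin d × Fin d) :=
    fun x => Classical.choose (key x) with hfdef
  have hfinj : Function.Injective f := by
    intro x y hxy
    apply Subtype.ext
    have hx := Classical.choose_spec (key x)
    have hy := Classical.choose_spec (key y)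
    rw [hx, hy]
    exact congrArg (mgDecode hn d h) hxy
  have h1 : S.ncard ≤
      Fintype.card ((Fin (d - h) → Fin n × Fin d) × (Fin h → Fin d × Fin d)) := by
    rw [← Nat.card_coe_set_eq, ← Nat.card_eq_fintype_card]
    exact Nat.card_le_card_of_injective f hfinj
  have h2 : Fintype.card ((Fin (d - h) → Fin n × Fin d) × (Fin h → Fin d × Fin d))
      = (n * d) ^ (d - h) * (d * d) ^ h := by
    simp [Fintype.card_prod, Fintype.card_fun]
  have h3 : S.ncard ≤ (n * d) ^ (d - h) * (d * d) ^ h := h2 ▸ h1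
  calc ((S.ncard : ℕ) : ℝ) ≤ (((n * d) ^ (d - h) * (d * d) ^ h : ℕ) : ℝ) := by
        exact_mod_cast h3
    _ ≤ ((d : ℝ) * n) ^ d * ((d : ℝ) / n) ^ h := mg_arith n d h hn hd hh
end

section
/- If X ~ Binomial(n,p) − p·n (a centered binomial random variable) and d ∈ [1,∞), then E|X|^d ≤ √(2π)·[(2·d·p·n)^{d/2} + (4d/3)^d]. -/
open Finset

/-- `t^d ≤ (d/e)^d e^t` for `t ≥ 0`, `d > 0`. -/
private lemma rpow_le_exp_aux {d : ℝ} (hd : 0 < d) {t : ℝ} (ht : 0 ≤ t) :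
    t ^ d ≤ (d / Real.exp 1) ^ d * Real.exp t := by
  rcases eq_or_lt_of_le ht with h | h
  · rw [← h, Real.zero_rpow hd.ne']
    positivity
  · have hde : 0 < d / Real.exp 1 := by positivity
    have h1 : Real.log (t / d) ≤ t / d - 1 := Real.log_le_sub_one_of_pos (by positivity)
    have h2 : d * Real.log t ≤ d * Real.log (d / Real.exp 1) + t := by
      rw [Real.log_div hd.ne' (Real.exp_pos 1).ne', Real.log_exp]
      have := mul_le_mul_of_nonneg_left h1 hd.le
      rw [Real.log_div h.ne' hd.ne'] at this
      have hdt : d * (t / d - 1) = t - d := by field_simp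
      nlinarith [this]
    calc t ^ d = Real.exp (d * Real.log t) := by
          rw [Real.rpow_def_of_pos h, mul_comm]
      _ ≤ Real.exp (d * Real.log (d / Real.exp 1) + t) := Real.exp_le_exp.2 h2
      _ = (d / Real.exp 1) ^ d * Real.exp t := by
          rw [Real.exp_add, Real.rpow_def_of_pos hde, mul_comm d]

/-- pointwise bound `|x|^d ≤ (d/(l e))^d (e^{lx} + e^{-lx})`. -/
private lemma ptwise {d : ℝ} (hd : 0 < d) {l : ℝ} (hl : 0 < l) (x : ℝ) :
    |x| ^ d ≤ (d / (l * Real.exp 1)) ^ d * (Real.exp (l * x) + Real.exp (-(l * x))) := by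
  have h1 : (l * |x|) ^ d ≤ (d / Real.exp 1) ^ d * Real.exp (l * |x|) :=
    rpow_le_exp_aux hd (by positivity)
  have h2 : (l * |x|) ^ d = l ^ d * |x| ^ d := Real.mul_rpow hl.le (abs_nonneg x)
  have h3 : Real.exp (l * |x|) ≤ Real.exp (l * x) + Real.exp (-(l * x)) := by
    rcases abs_cases x with ⟨he, _⟩ | ⟨he, _⟩
    · rw [he]; nlinarith [Real.exp_pos (-(l * x))]
    · rw [he, mul_neg]; nlinarith [Real.exp_pos (l * x)]
  have h4 : (d / (l * Real.exp 1)) ^ d = (d / Real.exp 1) ^ d / l ^ d := by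
    rw [show d / (l * Real.exp 1) = (d / Real.exp 1) / l by rw [div_div, mul_comm],
        Real.div_rpow (by positivity) hl.le]
  have hld : (0:ℝ) < l ^ d := Real.rpow_pos_of_pos hl d
  rw [h2] at h1
  rw [h4, div_mul_eq_mul_div, le_div_iff₀ hld]
  calc |x| ^ d * l ^ d = l ^ d * |x| ^ d := by ring
    _ ≤ (d / Real.exp 1) ^ d * Real.exp (l * |x|) := h1
    _ ≤ (d / Real.exp 1) ^ d * (Real.exp (l * x) + Real.exp (-(l * x))) := by
        have : (0:ℝ) ≤ (d / Real.exp 1) ^ d := Real.rpow_nonneg (by positivity) d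
        exact mul_le_mul_of_nonneg_left h3 this

/-- MGF bound for the centered binomial. -/
private lemma mgf_bound (n : ℕ) {p : ℝ} (hp0 : 0 ≤ p) (hp1 : p ≤ 1) (s : ℝ) :
    ∑ k ∈ Finset.range (n + 1),
        (Nat.choose n k : ℝ) * p ^ k * (1 - p) ^ (n - k) * Real.exp (s * ((k : ℝ) - p * n))
      ≤ Real.exp (p * n * (Real.exp s - 1 - s)) := by
  have hsum : ∑ k ∈ Finset.range (n + 1),
      (Nat.choose n k : ℝ) * p ^ k * (1 - p) ^ (n - k) * Real.exp (s * ((k : ℝ) - p * n))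
      = Real.exp (-(s * (p * n))) * (p * Real.exp s + (1 - p)) ^ n := by
    rw [add_pow, Finset.mul_sum]
    apply Finset.sum_congr rfl
    intro k hk
    have h1 : Real.exp (s * ((k : ℝ) - p * n)) =
        Real.exp (-(s * (p * n))) * Real.exp s ^ k := by
      rw [← Real.exp_nat_mul, ← Real.exp_add]
      congr 1
      ring
    rw [h1, mul_pow]
    ring
  rw [hsum]
  have hbase0 : (0:ℝ) ≤ p * Real.exp s + (1 - p) := by
    have := Real.exp_pos s
    nlinarith
  have hbase : p * Real.exp s + (1 - p) ≤ Real.exp (p * (Real.exp s - 1)) := by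
    have := Real.add_one_le_exp (p * (Real.exp s - 1))
    nlinarith
  have hpow : (p * Real.exp s + (1 - p)) ^ n ≤ Real.exp (p * (Real.exp s - 1)) ^ n :=
    pow_le_pow_left₀ hbase0 hbase n
  calc Real.exp (-(s * (p * n))) * (p * Real.exp s + (1 - p)) ^ n
      ≤ Real.exp (-(s * (p * n))) * Real.exp (p * (Real.exp s - 1)) ^ n := by
        exact mul_le_mul_of_nonneg_left hpow (Real.exp_pos _).le
    _ = Real.exp (p * n * (Real.exp s - 1 - s)) := by
        rw [← Real.exp_nat_mul, ← Real.exp_add]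
        congr 1
        ring

/-- **Lemma B.2 (moments of a centered binomial).** If `X = B − pn` with
`B ~ Binomial(n,p)` and `d ≥ 1` (real), then
`E|X|^d ≤ √(2π)·[(2dpn)^{d/2} + (4d/3)^d]`. The expectation is written out as
the sum over the binomial distribution. -/
theorem centered_binomial_abs_moment (n : ℕ) (p : ℝ) (hp0 : 0 ≤ p) (hp1 : p ≤ 1)
    (d : ℝ) (hd : 1 ≤ d) :
    ∑ k ∈ Finset.range (n + 1),
        (Nat.choose n k : ℝ) * p ^ k * (1 - p) ^ (n - k) * |(k : ℝ) - p * n| ^ d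
      ≤ Real.sqrt (2 * Real.pi) *
          ((2 * d * p * n) ^ (d / 2) + (4 * d / 3) ^ d) := by
  have hd0 : (0:ℝ) < d := lt_of_lt_of_le one_pos hd
  -- key step: for every 0 < l, bound by MGF
  have key : ∀ l : ℝ, 0 < l →
      ∑ k ∈ Finset.range (n + 1),
          (Nat.choose n k : ℝ) * p ^ k * (1 - p) ^ (n - k) * |(k : ℝ) - p * n| ^ d
        ≤ (d / (l * Real.exp 1)) ^ d *
            (2 * Real.exp (p * n * (Real.exp l - 1 - l))) := by
    intro l hl
    have hC : (0:ℝ) ≤ (d / (l * Real.exp 1)) ^ d := Real.rpow_nonneg (by positivity) d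
    have step1 : ∑ k ∈ Finset.range (n + 1),
        (Nat.choose n k : ℝ) * p ^ k * (1 - p) ^ (n - k) * |(k : ℝ) - p * n| ^ d
        ≤ (d / (l * Real.exp 1)) ^ d *
          ((∑ k ∈ Finset.range (n + 1), (Nat.choose n k : ℝ) * p ^ k * (1 - p) ^ (n - k) *
              Real.exp (l * ((k : ℝ) - p * n))) +
           (∑ k ∈ Finset.range (n + 1), (Nat.choose n k : ℝ) * p ^ k * (1 - p) ^ (n - k) *
              Real.exp ((-l) * ((k : ℝ) - p * n)))) := by
      rw [← Finset.sum_add_distrib, Finset.mul_sum]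
      apply Finset.sum_le_sum
      intro k hk
      have hw : (0:ℝ) ≤ (Nat.choose n k : ℝ) * p ^ k * (1 - p) ^ (n - k) := by
        have h1p : (0:ℝ) ≤ 1 - p := by linarith
        positivity
      have := ptwise hd0 hl ((k : ℝ) - p * n)
      calc (Nat.choose n k : ℝ) * p ^ k * (1 - p) ^ (n - k) * |(k : ℝ) - p * n| ^ d
          ≤ (Nat.choose n k : ℝ) * p ^ k * (1 - p) ^ (n - k) *
            ((d / (l * Real.exp 1)) ^ d *
              (Real.exp (l * ((k : ℝ) - p * n)) + Real.exp (-(l * ((k : ℝ) - p * n))))) :=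
            mul_le_mul_of_nonneg_left this hw
        _ = (d / (l * Real.exp 1)) ^ d *
            ((Nat.choose n k : ℝ) * p ^ k * (1 - p) ^ (n - k) *
                Real.exp (l * ((k : ℝ) - p * n)) +
             (Nat.choose n k : ℝ) * p ^ k * (1 - p) ^ (n - k) *
                Real.exp ((-l) * ((k : ℝ) - p * n))) := by
            rw [neg_mul]; ring
    have hm1 := mgf_bound n hp0 hp1 l
    have hm2 := mgf_bound n hp0 hp1 (-l)
    -- exp(p n (e^{-l} - 1 + l)) ≤ exp(p n (e^l - 1 - l))
    have hsinh : Real.exp (-l) - 1 - (-l) ≤ Real.exp l - 1 - l := by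
      have h1 : l ≤ Real.sinh l := Real.self_le_sinh_iff.2 hl.le
      rw [Real.sinh_eq] at h1
      linarith
    have hmono : Real.exp (p * n * (Real.exp (-l) - 1 - (-l)))
        ≤ Real.exp (p * n * (Real.exp l - 1 - l)) := by
      apply Real.exp_le_exp.2
      apply mul_le_mul_of_nonneg_left hsinh (by positivity)
    calc _ ≤ _ := step1
      _ ≤ (d / (l * Real.exp 1)) ^ d *
          (Real.exp (p * n * (Real.exp l - 1 - l)) +
           Real.exp (p * n * (Real.exp (-l) - 1 - (-l)))) := by
        apply mul_le_mul_of_nonneg_left _ hC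
        exact add_le_add hm1 hm2
      _ ≤ (d / (l * Real.exp 1)) ^ d *
          (2 * Real.exp (p * n * (Real.exp l - 1 - l))) := by
        apply mul_le_mul_of_nonneg_left _ hC
        linarith [hmono]
  set m : ℝ := p * n with hm
  have hm0 : (0:ℝ) ≤ m := by positivity
  have hsq0 : (0:ℝ) ≤ Real.sqrt (2 * Real.pi) := Real.sqrt_nonneg _
  have hR2 : (0:ℝ) ≤ (4 * d / 3) ^ d := Real.rpow_nonneg (by positivity) _
  have hR1 : (0:ℝ) ≤ (2 * d * p * n) ^ (d / 2) := by
    apply Real.rpow_nonneg; positivity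
  rcases le_or_gt d m with hcase | hcase
  · -- case d ≤ m : choose l = sqrt (d/m)
    have hmpos : (0:ℝ) < m := lt_of_lt_of_le (lt_of_lt_of_le one_pos hd) hcase
    set l : ℝ := Real.sqrt (d / m) with hldef
    have hl : 0 < l := Real.sqrt_pos.2 (by positivity)
    have hl1 : l ≤ 1 := by
      rw [hldef, show (1:ℝ) = Real.sqrt 1 by rw [Real.sqrt_one]]
      apply Real.sqrt_le_sqrt
      rw [div_le_one hmpos]
      exact hcase
    have hl2 : l ^ 2 = d / m := Real.sq_sqrt (by positivity)
    -- exp l - 1 - l ≤ l ^ 2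
    have hexp : Real.exp l - 1 - l ≤ l ^ 2 := by
      have hb := Real.exp_bound (x := l) (by rw [abs_of_pos hl]; exact hl1)
        (n := 2) (by norm_num)
      simp only [Finset.sum_range_succ, Finset.sum_range_zero, Nat.factorial] at hb
      rw [abs_of_pos hl] at hb
      have := (abs_le.1 hb).2
      nlinarith [sq_nonneg l]
    have hφ : m * (Real.exp l - 1 - l) ≤ d := by
      have h1 : m * (Real.exp l - 1 - l) ≤ m * l ^ 2 :=
        mul_le_mul_of_nonneg_left hexp hm0
      have h2 : m * l ^ 2 = d := by
        rw [hl2]; field_simp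
      linarith
    have hbound := key l hl
    have hCpos : (0:ℝ) ≤ (d / (l * Real.exp 1)) ^ d := Real.rpow_nonneg (by positivity) d
    have hstep2 : (d / (l * Real.exp 1)) ^ d * (2 * Real.exp (m * (Real.exp l - 1 - l)))
        ≤ (d / (l * Real.exp 1)) ^ d * (2 * Real.exp d) := by
      apply mul_le_mul_of_nonneg_left _ hCpos
      have := Real.exp_le_exp.2 hφ
      linarith
    -- compute (d / (l e))^d * (2 exp d) = 2 * (d*m)^(d/2)
    have hdl : d / l = Real.sqrt (d * m) := by
      have h1 : Real.sqrt ((d / l) ^ 2) = d / l := Real.sqrt_sq (by positivity)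
      have h2 : (d / l) ^ 2 = d * m := by
        rw [div_pow, hl2]
        field_simp
      rw [← h1, h2]
    have hcomp : (d / (l * Real.exp 1)) ^ d * (2 * Real.exp d) = 2 * (d * m) ^ (d / 2) := by
      have h1 : d / (l * Real.exp 1) = (d / l) / Real.exp 1 := by
        rw [div_div, mul_comm]
      rw [h1, Real.div_rpow (by positivity) (Real.exp_pos 1).le, Real.exp_one_rpow,
        hdl, Real.sqrt_eq_rpow, ← Real.rpow_mul (by positivity)]
      have hexpd : (0:ℝ) < Real.exp d := Real.exp_pos d
      rw [show 1 / 2 * d = d / 2 by ring]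
      field_simp
    -- 2 * (d*m)^(d/2) ≤ sqrt(2π) * (2*d*m)^(d/2)
    have hmain : 2 * (d * m) ^ (d / 2) ≤
        Real.sqrt (2 * Real.pi) * (2 * d * p * n) ^ (d / 2) := by
      have hdm0 : (0:ℝ) ≤ d * m := mul_nonneg hd0.le hm0
      have hbase : (2 * d * p * n : ℝ) = 2 * (d * m) := by rw [hm]; ring
      have hsplit : (2 * (d * m)) ^ (d / 2) = (2:ℝ) ^ (d / 2) * (d * m) ^ (d / 2) :=
        Real.mul_rpow (by norm_num) hdm0
      have h2d : (2:ℝ) ^ ((1:ℝ)/2) ≤ (2:ℝ) ^ (d / 2) :=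
        (Real.rpow_le_rpow_left_iff (by norm_num)).2 (by linarith)
      have hsqrt2 : (2:ℝ) ^ ((1:ℝ)/2) = Real.sqrt 2 := (Real.sqrt_eq_rpow 2).symm
      have h4pi : (2:ℝ) ≤ Real.sqrt (2 * Real.pi) * Real.sqrt 2 := by
        rw [← Real.sqrt_mul (by positivity)]
        have : (4:ℝ) ≤ 2 * Real.pi * 2 := by nlinarith [Real.pi_gt_three]
        calc (2:ℝ) = Real.sqrt 4 := by
              rw [show (4:ℝ) = 2 ^ 2 by norm_num, Real.sqrt_sq (by norm_num)]
          _ ≤ Real.sqrt (2 * Real.pi * 2) := Real.sqrt_le_sqrt this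
      have hfact : (2:ℝ) ≤ Real.sqrt (2 * Real.pi) * (2:ℝ) ^ (d / 2) := by
        calc (2:ℝ) ≤ Real.sqrt (2 * Real.pi) * Real.sqrt 2 := h4pi
          _ = Real.sqrt (2 * Real.pi) * (2:ℝ) ^ ((1:ℝ)/2) := by rw [hsqrt2]
          _ ≤ Real.sqrt (2 * Real.pi) * (2:ℝ) ^ (d / 2) :=
              mul_le_mul_of_nonneg_left h2d hsq0
      have hdm : (0:ℝ) ≤ (d * m) ^ (d / 2) := Real.rpow_nonneg hdm0 _
      rw [hbase, hsplit]
      calc 2 * (d * m) ^ (d / 2)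
          ≤ (Real.sqrt (2 * Real.pi) * (2:ℝ) ^ (d / 2)) * (d * m) ^ (d / 2) :=
            mul_le_mul_of_nonneg_right hfact hdm
        _ = Real.sqrt (2 * Real.pi) * ((2:ℝ) ^ (d / 2) * (d * m) ^ (d / 2)) := by ring
    calc _ ≤ _ := hbound
      _ ≤ (d / (l * Real.exp 1)) ^ d * (2 * Real.exp d) := hstep2
      _ = 2 * (d * m) ^ (d / 2) := hcomp
      _ ≤ Real.sqrt (2 * Real.pi) * (2 * d * p * n) ^ (d / 2) := hmain
      _ ≤ Real.sqrt (2 * Real.pi) * ((2 * d * p * n) ^ (d / 2) + (4 * d / 3) ^ d) := by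
          nlinarith [mul_nonneg hsq0 hR2]
  · -- case m < d : choose l = 1
    have hbound := key 1 one_pos
    have hCpos : (0:ℝ) ≤ (d / (1 * Real.exp 1)) ^ d := Real.rpow_nonneg (by positivity) d
    have he3 : Real.exp 1 < 3 := by
      have := Real.exp_one_lt_d9; linarith
    have he2 : (2:ℝ) < Real.exp 1 := by
      have := Real.exp_one_gt_d9; linarith
    have hφ : m * (Real.exp 1 - 1 - 1) ≤ d := by
      have h1 : Real.exp 1 - 1 - 1 ≤ 1 := by linarith
      have h2 : 0 ≤ Real.exp 1 - 1 - 1 := by linarith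
      calc m * (Real.exp 1 - 1 - 1) ≤ d * 1 := by
            apply mul_le_mul (le_of_lt hcase) h1 h2 hd0.le
        _ = d := mul_one d
    have hstep2 : (d / (1 * Real.exp 1)) ^ d * (2 * Real.exp (m * (Real.exp 1 - 1 - 1)))
        ≤ (d / (1 * Real.exp 1)) ^ d * (2 * Real.exp d) := by
      apply mul_le_mul_of_nonneg_left _ hCpos
      have := Real.exp_le_exp.2 hφ
      linarith
    have hcomp : (d / (1 * Real.exp 1)) ^ d * (2 * Real.exp d) = 2 * d ^ d := by
      rw [one_mul, Real.div_rpow hd0.le (Real.exp_pos 1).le, Real.exp_one_rpow]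
      have hexpd : (0:ℝ) < Real.exp d := Real.exp_pos d
      field_simp
    have hmain : 2 * d ^ d ≤ Real.sqrt (2 * Real.pi) * (4 * d / 3) ^ d := by
      have hb : (4 * d / 3 : ℝ) = (4 / 3) * d := by ring
      have hsplit : ((4 / 3 : ℝ) * d) ^ d = (4 / 3 : ℝ) ^ d * d ^ d :=
        Real.mul_rpow (by norm_num) hd0.le
      have h43 : (1:ℝ) ≤ (4 / 3 : ℝ) ^ d := Real.one_le_rpow (by norm_num) hd0.le
      have hs2 : (2:ℝ) ≤ Real.sqrt (2 * Real.pi) := by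
        have : (4:ℝ) ≤ 2 * Real.pi := by nlinarith [Real.pi_gt_three]
        calc (2:ℝ) = Real.sqrt 4 := by
              rw [show (4:ℝ) = 2 ^ 2 by norm_num, Real.sqrt_sq (by norm_num)]
          _ ≤ Real.sqrt (2 * Real.pi) := Real.sqrt_le_sqrt this
      have hdd : (0:ℝ) ≤ d ^ d := Real.rpow_nonneg hd0.le d
      have hfact : (2:ℝ) ≤ Real.sqrt (2 * Real.pi) * (4 / 3 : ℝ) ^ d := by
        calc (2:ℝ) ≤ Real.sqrt (2 * Real.pi) := hs2
          _ ≤ Real.sqrt (2 * Real.pi) * (4 / 3 : ℝ) ^ d :=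
              le_mul_of_one_le_right hsq0 h43
      rw [hb, hsplit]
      calc 2 * d ^ d ≤ (Real.sqrt (2 * Real.pi) * (4 / 3 : ℝ) ^ d) * d ^ d :=
            mul_le_mul_of_nonneg_right hfact hdd
        _ = Real.sqrt (2 * Real.pi) * ((4 / 3 : ℝ) ^ d * d ^ d) := by ring
    calc _ ≤ _ := hbound
      _ ≤ (d / (1 * Real.exp 1)) ^ d * (2 * Real.exp d) := hstep2
      _ = 2 * d ^ d := hcomp
      _ ≤ Real.sqrt (2 * Real.pi) * (4 * d / 3) ^ d := hmain
      _ ≤ Real.sqrt (2 * Real.pi) * ((2 * d * p * n) ^ (d / 2) + (4 * d / 3) ^ d) := by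
          nlinarith [mul_nonneg hsq0 hR1]
end

section
/- For all a > 0 and b ≥ 1/2, ∫₀^∞ exp(−a·x^{1/b}) dx = Γ(b+1)/a^b ≤ √(π/2)·(b/a)^b. -/
open Real Set

lemma myGamma_le_one {x : ℝ} (h1 : 1 ≤ x) (h2 : x ≤ 2) : Real.Gamma x ≤ 1 := by
  have hconv := Real.convexOn_log_Gamma
  have hx : x = (2 - x) • (1:ℝ) + (x - 1) • (2:ℝ) := by simp; ring
  have hle := hconv.2 (by norm_num : (1:ℝ) ∈ Ioi (0:ℝ)) (by norm_num : (2:ℝ) ∈ Ioi (0:ℝ))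
    (by linarith : (0:ℝ) ≤ 2 - x) (by linarith : (0:ℝ) ≤ x - 1) (by ring)
  rw [← hx] at hle
  simp only [Function.comp_apply, Real.Gamma_one, Real.Gamma_two, Real.log_one,
    smul_eq_mul, mul_zero, add_zero] at hle
  have hpos : 0 < Real.Gamma x := Real.Gamma_pos_of_pos (by linarith)
  calc Real.Gamma x = Real.exp (Real.log (Real.Gamma x)) := (Real.exp_log hpos).symm
    _ ≤ Real.exp 0 := Real.exp_le_exp.2 hle
    _ = 1 := Real.exp_zero

lemma myGamma_add_one_le (n : ℕ) : ∀ x : ℝ, 1 ≤ x → x ≤ (n : ℝ) + 2 →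
    Real.Gamma (x + 1) ≤ x ^ x := by
  induction n with
  | zero =>
    intro x h1 h2
    norm_num at h2
    have hx0 : x ≠ 0 := by linarith
    rw [Real.Gamma_add_one hx0]
    calc x * Real.Gamma x ≤ x * 1 := by
          have := myGamma_le_one h1 h2
          nlinarith
      _ = x ^ (1:ℝ) := by rw [Real.rpow_one, mul_one]
      _ ≤ x ^ x := Real.rpow_le_rpow_of_exponent_le h1 h1
  | succ n ih =>
    intro x h1 h2
    by_cases hx : x ≤ (n : ℝ) + 2
    · exact ih x h1 hx
    push_neg at hx
    push_cast at h2
    have hx0 : x ≠ 0 := by linarith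
    have h2x : 2 ≤ x := by
      have : (0:ℝ) ≤ (n:ℝ) := Nat.cast_nonneg n
      linarith
    rw [Real.Gamma_add_one hx0]
    have hG : Real.Gamma x ≤ (x - 1) ^ (x - 1) := by
      have := ih (x - 1) (by linarith) (by linarith)
      simpa using this
    calc x * Real.Gamma x ≤ x * (x - 1) ^ (x - 1) := by
          have hp : (0:ℝ) < x := by linarith
          nlinarith [Real.rpow_nonneg (by linarith : (0:ℝ) ≤ x - 1) (x - 1)]
      _ ≤ x * x ^ (x - 1) := by
          have := Real.rpow_le_rpow (by linarith : (0:ℝ) ≤ x - 1)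
            (by linarith : x - 1 ≤ x) (by linarith : (0:ℝ) ≤ x - 1)
          nlinarith
      _ = x ^ x := by
          rw [← Real.rpow_one_add' (by linarith : (0:ℝ) ≤ x) (by linarith : (1:ℝ) + (x-1) ≠ 0)]
          ring_nf

lemma myGamma_three_halves : Real.Gamma (3/2 : ℝ) = Real.sqrt π / 2 := by
  have : (3/2 : ℝ) = 1/2 + 1 := by norm_num
  rw [this, Real.Gamma_add_one (by norm_num), Real.Gamma_one_half_eq]
  ring

lemma myGamma_interp {b : ℝ} (h1 : 1/2 ≤ b) (h2 : b ≤ 1) :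
    Real.Gamma (b + 1) ≤ (π/4) ^ (1 - b) := by
  have hconv := Real.convexOn_log_Gamma
  have hle := hconv.2 (by norm_num : (3/2:ℝ) ∈ Ioi (0:ℝ)) (by norm_num : (2:ℝ) ∈ Ioi (0:ℝ))
    (by linarith : (0:ℝ) ≤ 2 - 2*b) (by linarith : (0:ℝ) ≤ 2*b - 1) (by ring)
  have hpt : (2 - 2*b) • (3/2:ℝ) + (2*b - 1) • (2:ℝ) = b + 1 := by
    simp only [smul_eq_mul]; ring
  rw [hpt] at hle
  simp only [Function.comp_apply, Real.Gamma_two, Real.log_one, smul_eq_mul, mul_zero,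
    add_zero, myGamma_three_halves] at hle
  have hlog : (2 - 2*b) * Real.log (Real.sqrt π / 2) = (1 - b) * Real.log (π/4) := by
    have h4 : (π/4 : ℝ) = (Real.sqrt π / 2) ^ (2:ℕ) := by
      rw [div_pow, Real.sq_sqrt Real.pi_pos.le]; norm_num
    rw [h4, Real.log_pow]; push_cast; ring
  rw [hlog] at hle
  have hpos : 0 < Real.Gamma (b + 1) := Real.Gamma_pos_of_pos (by linarith)
  calc Real.Gamma (b+1) = Real.exp (Real.log (Real.Gamma (b+1))) := (Real.exp_log hpos).symm
    _ ≤ Real.exp ((1 - b) * Real.log (π/4)) := Real.exp_le_exp.2 hle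
    _ = (π/4) ^ (1 - b) := by
        rw [Real.rpow_def_of_pos (by positivity : (0:ℝ) < π/4)]; ring_nf

lemma log_numeric : 3 * Real.log 2 ≤ 1 + Real.log π := by
  have h8 : (8:ℝ) ≤ Real.exp 1 * π := by
    nlinarith [Real.exp_one_gt_d9, Real.pi_gt_d6]
  have h1 : Real.log 8 ≤ Real.log (Real.exp 1 * π) :=
    Real.log_le_log (by norm_num) h8
  rw [Real.log_mul (Real.exp_ne_zero 1) Real.pi_ne_zero, Real.log_exp] at h1
  have h2 : Real.log 8 = 3 * Real.log 2 := by
    rw [show (8:ℝ) = 2 ^ (3:ℕ) by norm_num, Real.log_pow]; push_cast; ring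
  linarith

lemma myGamma_bound {b : ℝ} (hb : 1/2 ≤ b) :
    Real.Gamma (b + 1) ≤ Real.sqrt (π/2) * b ^ b := by
  have hb0 : (0:ℝ) < b := by linarith
  have hbb : (0:ℝ) < b ^ b := Real.rpow_pos_of_pos hb0 b
  rcases le_or_gt b 1 with h1 | h1
  · -- middle range
    refine (myGamma_interp hb h1).trans ?_
    have hlb : b * Real.log b ≥ b - 1/2 - b * Real.log 2 := by
      have h := Real.log_le_sub_one_of_pos (by positivity : (0:ℝ) < 1/(2*b))
      have hl : Real.log (1/(2*b)) = -(Real.log 2 + Real.log b) := by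
        rw [one_div, Real.log_inv, Real.log_mul (by norm_num) (ne_of_gt hb0)]
      rw [hl] at h
      have := mul_le_mul_of_nonneg_left h hb0.le
      have hb' : b * (1/(2*b) - 1) = 1/2 - b := by field_simp
      nlinarith
    have hC : 0 ≤ 1 + Real.log π - 3 * Real.log 2 := by
      have := log_numeric; linarith
    have hkey : (1 - b) * Real.log (π/4) ≤ 1/2 * Real.log (π/2) + b * Real.log b := by
      have l4 : Real.log (π/4 : ℝ) = Real.log π - 2 * Real.log 2 := by
        rw [Real.log_div Real.pi_ne_zero (by norm_num),
          show (4:ℝ) = 2 ^ (2:ℕ) by norm_num, Real.log_pow]; push_cast; ring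
      have l2 : Real.log (π/2 : ℝ) = Real.log π - Real.log 2 := by
        rw [Real.log_div Real.pi_ne_zero (by norm_num)]
      rw [l4, l2]
      nlinarith [mul_nonneg (by linarith : (0:ℝ) ≤ b - 1/2) hC]
    calc (π/4 : ℝ) ^ (1 - b) = Real.exp ((1 - b) * Real.log (π/4)) := by
          rw [Real.rpow_def_of_pos (by positivity : (0:ℝ) < π/4)]; ring_nf
      _ ≤ Real.exp (1/2 * Real.log (π/2) + b * Real.log b) := Real.exp_le_exp.2 hkey
      _ = Real.sqrt (π/2) * b ^ b := by
          rw [Real.exp_add, Real.rpow_def_of_pos hb0,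
            Real.sqrt_eq_rpow]
          rw [Real.rpow_def_of_pos (by positivity : (0:ℝ) < π/2)]
          ring_nf
  · -- b ≥ 1
    obtain ⟨n, hn⟩ := exists_nat_ge b
    have h := myGamma_add_one_le n b h1.le (by push_cast; linarith)
    have hs : (1:ℝ) ≤ Real.sqrt (π/2) := by
      rw [show (1:ℝ) = Real.sqrt 1 from (Real.sqrt_one).symm]
      exact Real.sqrt_le_sqrt (by nlinarith [Real.pi_gt_d6])
    nlinarith

/-- **Gamma-integral identity and bound (used in Lemma B.2).** For `a > 0` and `b ≥ 1/2`,
`∫₀^∞ exp(−a·x^{1/b}) dx = Γ(b+1)/a^b ≤ √(π/2)·(b/a)^b`. -/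
theorem integral_exp_neg_rpow_eq_gamma (a b : ℝ) (ha : 0 < a) (hb : 1 / 2 ≤ b) :
    (∫ x in Set.Ioi (0 : ℝ), Real.exp (-(a * x ^ (1 / b))))
        = Real.Gamma (b + 1) / a ^ b ∧
    Real.Gamma (b + 1) / a ^ b ≤ Real.sqrt (Real.pi / 2) * (b / a) ^ b := by
  have hb0 : (0:ℝ) < b := by linarith
  have hab : (0:ℝ) < a ^ b := Real.rpow_pos_of_pos ha b
  constructor
  · have h := integral_exp_neg_mul_rpow (by positivity : (0:ℝ) < 1/b) ha
    simp_rw [neg_mul] at h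
    rw [h, one_div_one_div, neg_div, one_div_one_div, Real.rpow_neg ha.le]
    rw [div_eq_inv_mul]
  · rw [Real.div_rpow hb0.le ha.le, div_le_iff₀ hab, mul_assoc, div_mul_cancel₀ _ hab.ne']
    exact myGamma_bound hb
end

section
/- Let g be a real random variable with E[g²] finite and suppose E[g⁴] ≤ K·E[g²]² for some K ≥ 1. If Pr{g² > ε} ≤ δ and δ·K < 1, then E[g²] ≤ ε / (1 − √(δK)). -/
open MeasureTheory

/-- **Rearranged Paley–Zygmund argument (as in Corollary 4.4).** If `E[g⁴] ≤ K·E[g²]²`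
with `K ≥ 1`, and `Pr{g² > ε} ≤ δ` with `δ·K < 1`, then `E[g²] ≤ ε/(1 − √(δK))`. -/
theorem paley_zygmund_rearranged {Ω : Type*} [MeasurableSpace Ω]
    (μ : Measure Ω) [IsProbabilityMeasure μ] (g : Ω → ℝ)
    (hg2 : Integrable (fun ω => (g ω) ^ 2) μ)
    (hg4 : Integrable (fun ω => (g ω) ^ 4) μ)
    (K : ℝ) (hK : 1 ≤ K)
    (hmom : (∫ ω, (g ω) ^ 4 ∂μ) ≤ K * (∫ ω, (g ω) ^ 2 ∂μ) ^ 2)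
    (ε δ : ℝ)
    (hprob : (μ {ω | ε < (g ω) ^ 2}).toReal ≤ δ)
    (hδK : δ * K < 1) :
    (∫ ω, (g ω) ^ 2 ∂μ) ≤ ε / (1 - Real.sqrt (δ * K)) := by
  have hδ0 : 0 ≤ δ := le_trans ENNReal.toReal_nonneg hprob
  have hδK0 : 0 ≤ δ * K := mul_nonneg hδ0 (le_trans zero_le_one hK)
  have hs1 : Real.sqrt (δ * K) < 1 := by
    rw [show (1:ℝ) = Real.sqrt 1 by simp]
    exact Real.sqrt_lt_sqrt hδK0 (by simpa using hδK)
  have hden : 0 < 1 - Real.sqrt (δ * K) := by linarith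
  -- ε must be nonnegative
  have hε0 : 0 ≤ ε := by
    by_contra h
    push_neg at h
    have : {ω | ε < (g ω) ^ 2} = Set.univ := by
      ext ω; simp only [Set.mem_setOf_eq, Set.mem_univ, iff_true]
      exact lt_of_lt_of_le h (sq_nonneg _)
    rw [this, measure_univ] at hprob
    simp at hprob
    nlinarith
  set m := ∫ ω, (g ω) ^ 2 ∂μ with hm
  have hm0 : 0 ≤ m := integral_nonneg fun ω => sq_nonneg _
  by_cases hcase : m ≤ ε
  · calc m ≤ ε := hcase
      _ = ε / 1 := (div_one ε).symm
      _ ≤ ε / (1 - Real.sqrt (δ * K)) := by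
          apply div_le_div_of_nonneg_left hε0 hden; linarith [Real.sqrt_nonneg (δ * K)]
  · push_neg at hcase
    -- measurable version of g²
    have hmeas := hg2.aestronglyMeasurable
    set f' := hmeas.mk _ with hf'
    have hf'm : StronglyMeasurable f' := hmeas.stronglyMeasurable_mk
    have hae : (fun ω => (g ω) ^ 2) =ᵐ[μ] f' := hmeas.ae_eq_mk
    set A : Set Ω := {ω | ε < f' ω} with hA
    have hAm : MeasurableSet A := hf'm.measurable measurableSet_Ioi
    have hAeq : μ A = μ {ω | ε < (g ω) ^ 2} := by
      apply measure_congr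
      rw [Filter.eventuallyEq_set]
      filter_upwards [hae] with ω hω
      simp [hA, hω]
    have hprobA : (μ A).toReal ≤ δ := by rw [hAeq]; exact hprob
    -- Step 1: m - ε ≤ ∫_A g²
    have hsplit : m = (∫ ω in A, (g ω) ^ 2 ∂μ) + ∫ ω in Aᶜ, (g ω) ^ 2 ∂μ :=
      (integral_add_compl hAm hg2).symm
    have hcompl : (∫ ω in Aᶜ, (g ω) ^ 2 ∂μ) ≤ ε := by
      have h1 : (∫ ω in Aᶜ, (g ω) ^ 2 ∂μ) ≤ ∫ _ in Aᶜ, ε ∂μ := by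
        apply integral_mono_ae (hg2.restrict) (integrable_const ε)
        filter_upwards [ae_restrict_of_ae hae, ae_restrict_mem hAm.compl] with ω h1 h2
        rw [h1]
        simpa [hA] using h2
      have h2 : (∫ _ in Aᶜ, ε ∂μ) = ε * (μ Aᶜ).toReal := by
        simp [mul_comm, Measure.real]
      have h3 : (μ Aᶜ).toReal ≤ 1 := by
        have := measure_mono (Set.subset_univ Aᶜ) (μ := μ)
        rw [measure_univ] at this
        simpa using ENNReal.toReal_mono (by simp) this
      calc (∫ ω in Aᶜ, (g ω) ^ 2 ∂μ) ≤ ε * (μ Aᶜ).toReal := by rw [← h2]; exact h1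
        _ ≤ ε * 1 := by apply mul_le_mul_of_nonneg_left h3 hε0
        _ = ε := mul_one ε
    have hstep1 : m - ε ≤ ∫ ω in A, (g ω) ^ 2 ∂μ := by linarith [hsplit, hcompl]
    -- Step 2: Cauchy–Schwarz
    have hind : (∫ ω in A, (g ω) ^ 2 ∂μ) = ∫ ω, (g ω) ^ 2 * A.indicator (fun _ => (1:ℝ)) ω ∂μ := by
      rw [← integral_indicator hAm]
      congr 1
      ext ω
      by_cases h : ω ∈ A <;> simp [Set.indicator_of_mem, Set.indicator_of_notMem, h]
    have hconj : Real.HolderConjugate 2 2 := Real.holderConjugate_iff.mpr ⟨by norm_num, by norm_num⟩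
    have hmem1 : MemLp (fun ω => (g ω) ^ 2) (ENNReal.ofReal 2) μ := by
      rw [show ENNReal.ofReal 2 = 2 by norm_num]
      refine (memLp_two_iff_integrable_sq hmeas).mpr ?_
      have : (fun ω => ((g ω) ^ 2) ^ 2) = fun ω => (g ω) ^ 4 := by ext ω; ring
      rw [this]; exact hg4
    have hmem2 : MemLp (A.indicator (fun _ => (1:ℝ))) (ENNReal.ofReal 2) μ :=
      MemLp.indicator hAm (memLp_const 1)
    have hCS := integral_mul_le_Lp_mul_Lq_of_nonneg hconj
      (Filter.Eventually.of_forall fun ω => sq_nonneg (g ω))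
      (Filter.Eventually.of_forall fun ω => Set.indicator_nonneg (fun _ _ => zero_le_one) ω)
      hmem1 hmem2
    have e1 : (∫ ω, ((g ω) ^ 2) ^ (2:ℝ) ∂μ) = ∫ ω, (g ω) ^ 4 ∂μ := by
      congr 1; ext ω
      rw [show ((g ω)^2) ^ (2:ℝ) = ((g ω)^2) ^ (2:ℕ) by
        rw [← Real.rpow_natCast ((g ω)^2) 2]; norm_num]
      ring
    have e2 : (∫ ω, (A.indicator (fun _ => (1:ℝ)) ω) ^ (2:ℝ) ∂μ) = (μ A).toReal := by
      have : (fun ω => (A.indicator (fun _ => (1:ℝ)) ω) ^ (2:ℝ)) = A.indicator (fun _ => (1:ℝ)) := by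
        ext ω
        by_cases h : ω ∈ A <;> simp [Set.indicator_of_mem, Set.indicator_of_notMem, h,
          Real.rpow_natCast]
      rw [this, integral_indicator hAm]
      simp [Measure.real]
    rw [e1, e2] at hCS
    have hint4 : (∫ ω, (g ω) ^ 4 ∂μ) ≤ K * m ^ 2 := hmom
    have h4nonneg : 0 ≤ ∫ ω, (g ω) ^ 4 ∂μ := integral_nonneg fun ω => by positivity
    have hsq : m - ε ≤ Real.sqrt (δ * K) * m := by
      calc m - ε ≤ ∫ ω, (g ω) ^ 2 * A.indicator (fun _ => (1:ℝ)) ω ∂μ := by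
            rw [← hind]; exact hstep1
        _ ≤ (∫ ω, (g ω) ^ 4 ∂μ) ^ ((1:ℝ)/2) * ((μ A).toReal) ^ ((1:ℝ)/2) := hCS
        _ = Real.sqrt (∫ ω, (g ω) ^ 4 ∂μ) * Real.sqrt ((μ A).toReal) := by
            rw [Real.sqrt_eq_rpow, Real.sqrt_eq_rpow]
        _ ≤ Real.sqrt (K * m ^ 2) * Real.sqrt δ := by
            apply mul_le_mul (Real.sqrt_le_sqrt hint4) (Real.sqrt_le_sqrt hprobA)
              (Real.sqrt_nonneg _) (Real.sqrt_nonneg _)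
        _ = Real.sqrt (δ * K) * m := by
            rw [← Real.sqrt_mul (by positivity) δ, show K * m ^ 2 * δ = (δ * K) * m ^ 2 by ring,
              Real.sqrt_mul hδK0, Real.sqrt_sq hm0]
    have : m * (1 - Real.sqrt (δ * K)) ≤ ε := by nlinarith
    rw [le_div_iff₀ hden]
    linarith
end

section
/- In the planted submatrix problem, for the cumulant quantities κ_α defined recursively by κ_α = E[x·X^α] − Σ_{0 ≤ β ⪇ α} κ_β·binom(α,β)·E[X^{α−β}], one has κ_0 = ρ and, for every multigraph α with |α| ≥ 1, |κ_α| ≤ (|α|+1)^{|α|} · λ^{|α|} · ρ^{|V(α)|}. -/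
variable {n : ℕ}

/-- `E[X^α] = λ^{|α|}·ρ^{|V(α)|}` in the planted submatrix model, where `X_{ij} = λ v_i v_j`
with `v` i.i.d. `Bernoulli(ρ)`. -/
noncomputable def momX (lam ρ : ℝ) (α : Sym2 (Fin n) → ℕ) : ℝ :=
  lam ^ mgEdges α * ρ ^ (mgVerts α).ncard

/-- `E[x·X^α] = λ^{|α|}·ρ^{|V(α)∪{1}|}` in the planted submatrix model, where `x = v_1`. -/
noncomputable def momxX (lam ρ : ℝ) (v1 : Fin n) (α : Sym2 (Fin n) → ℕ) : ℝ :=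
  lam ^ mgEdges α * ρ ^ (insert v1 (mgVerts α)).ncard

/-- `κ` satisfies the defining recursion of the cumulant quantities `κ_α`:
`κ_α = E[x X^α] − Σ_{0 ≤ β ⪇ α} κ_β·binom(α,β)·E[X^{α−β}]`. -/
def KappaRec (lam ρ : ℝ) (v1 : Fin n) (κ : (Sym2 (Fin n) → ℕ) → ℝ) : Prop :=
  ∀ α : Sym2 (Fin n) → ℕ,
    κ α = momxX lam ρ v1 α
      - ∑ β ∈ (Finset.Icc 0 α).erase α,
          κ β * (∏ e, ((α e).choose (β e) : ℝ)) * momX lam ρ (fun e => α e - β e)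

lemma key_choose_sum (α : Sym2 (Fin n) → ℕ) (m : ℕ) :
    ∑ β ∈ Finset.Icc (0 : Sym2 (Fin n) → ℕ) α,
      (∏ e, (α e).choose (β e)) * m ^ (mgEdges β) = (m + 1) ^ (mgEdges α) := by
  unfold mgEdges
  have h1 : ∀ β : Sym2 (Fin n) → ℕ,
      (∏ e, (α e).choose (β e)) * m ^ (∑ e, β e)
        = ∏ e, (α e).choose (β e) * m ^ (β e) := by
    intro β
    rw [← Finset.prod_pow_eq_pow_sum, ← Finset.prod_mul_distrib]
  simp_rw [h1]
  rw [Pi.Icc_eq]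
  simp_rw [Pi.zero_apply]
  rw [← Finset.prod_univ_sum (fun i => Finset.Icc (0:ℕ) (α i))
      (fun i k => (α i).choose k * m ^ k)]
  have h2 : ∀ a : ℕ, ∑ k ∈ Finset.Icc 0 a, a.choose k * m ^ k = (m + 1) ^ a := by
    intro a
    have : Finset.Icc 0 a = Finset.range (a + 1) := by
      ext k; simp [Nat.lt_succ_iff]
    rw [this, add_pow m 1 a]
    simp [mul_comm]
  simp_rw [h2]
  rw [Finset.prod_pow_eq_pow_sum]

lemma mgVerts_zero : mgVerts (0 : Sym2 (Fin n) → ℕ) = ∅ := by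
  ext v; simp [mgVerts]

/-- **Lemma 3.4 (bound on the planted-submatrix cumulants).** With `κ` the cumulant
quantities of the planted submatrix problem (defined by the stated recursion), one has
`κ_0 = ρ` and, for every multigraph `α` with at least one edge,
`|κ_α| ≤ (|α|+1)^{|α|}·λ^{|α|}·ρ^{|V(α)|}`. -/
theorem kappa_bound_planted_submatrix {n : ℕ} (hn : 0 < n) (lam ρ : ℝ)
    (hlam : 0 ≤ lam) (hρ0 : 0 < ρ) (hρ1 : ρ ≤ 1)
    (κ : (Sym2 (Fin n) → ℕ) → ℝ)
    (hκ : KappaRec lam ρ (⟨0, hn⟩ : Fin n) κ) :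
    κ 0 = ρ ∧
    ∀ α : Sym2 (Fin n) → ℕ, 1 ≤ mgEdges α →
      |κ α| ≤ ((mgEdges α : ℝ) + 1) ^ mgEdges α * lam ^ mgEdges α *
        ρ ^ (mgVerts α).ncard := by
  set v1 : Fin n := ⟨0, hn⟩
  have hk0 : κ 0 = ρ := by
    have h := hκ 0
    rw [Finset.Icc_self, Finset.erase_singleton, Finset.sum_empty, sub_zero] at h
    rw [h, momxX, mgVerts_zero]
    have he : mgEdges (0 : Sym2 (Fin n) → ℕ) = 0 := by simp [mgEdges]
    rw [he]
    simp
  refine ⟨hk0, ?_⟩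
  have main : ∀ m : ℕ, ∀ α : Sym2 (Fin n) → ℕ, mgEdges α = m → 1 ≤ mgEdges α →
      |κ α| ≤ ((mgEdges α : ℝ) + 1) ^ mgEdges α * lam ^ mgEdges α *
        ρ ^ (mgVerts α).ncard := by
    intro m
    induction m using Nat.strong_induction_on with
    | _ m ih =>
      intro α hm h1
      subst hm
      set m := mgEdges α with hmdef
      -- per-term bound
      have hterm : ∀ β ∈ (Finset.Icc (0 : Sym2 (Fin n) → ℕ) α).erase α,
          |κ β * (∏ e, ((α e).choose (β e) : ℝ)) * momX lam ρ (fun e => α e - β e)|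
            ≤ (∏ e, ((α e).choose (β e) : ℝ)) * (m : ℝ) ^ (mgEdges β)
              * (lam ^ m * ρ ^ (mgVerts α).ncard) := by
        intro β hβ
        rw [Finset.mem_erase, Finset.mem_Icc] at hβ
        obtain ⟨hne, -, hle⟩ := hβ
        have hle' : ∀ e, β e ≤ α e := fun e => hle e
        -- edges split
        have hes : mgEdges β + mgEdges (fun e => α e - β e) = m := by
          rw [hmdef]
          unfold mgEdges
          rw [← Finset.sum_add_distrib]
          exact Finset.sum_congr rfl fun e _ => Nat.add_sub_cancel' (hle' e)
        have hlt : mgEdges β < m := by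
          have hex : ∃ e, β e < α e := by
            by_contra hc
            push_neg at hc
            exact hne (funext fun e => le_antisymm (hle' e) (hc e))
          obtain ⟨e, he⟩ := hex
          rw [hmdef]
          exact Finset.sum_lt_sum (fun i _ => hle' i) ⟨e, Finset.mem_univ e, he⟩
        -- vertex count
        have hv : (mgVerts α).ncard
            ≤ (mgVerts β).ncard + (mgVerts (fun e => α e - β e)).ncard := by
          have hsubset : mgVerts α ⊆ mgVerts β ∪ mgVerts (fun e => α e - β e) := by
            rintro v ⟨e, he, hve⟩
            rcases Nat.eq_zero_or_pos (β e) with h0 | h0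
            · right
              refine ⟨e, ?_, hve⟩
              show α e - β e ≠ 0
              omega
            · left
              refine ⟨e, ?_, hve⟩
              omega
          calc (mgVerts α).ncard
              ≤ (mgVerts β ∪ mgVerts (fun e => α e - β e)).ncard :=
                Set.ncard_le_ncard hsubset (Set.toFinite _)
            _ ≤ _ := Set.ncard_union_le _ _
        -- bound on |κ β|
        have hkβ : |κ β| ≤ (m : ℝ) ^ (mgEdges β) * lam ^ (mgEdges β)
            * ρ ^ (mgVerts β).ncard := by
          rcases Nat.eq_zero_or_pos (mgEdges β) with h0 | h0
          · have hβ0 : β = 0 := by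
              funext e
              exact Finset.sum_eq_zero_iff.mp h0 e (Finset.mem_univ e)
            subst hβ0
            rw [hk0]
            have he0 : mgEdges (0 : Sym2 (Fin n) → ℕ) = 0 := by simp [mgEdges]
            rw [he0, mgVerts_zero]
            simp only [Set.ncard_empty, pow_zero, mul_one, one_mul]
            rw [abs_of_pos hρ0]
            exact hρ1
          · have := ih (mgEdges β) hlt β rfl h0
            refine this.trans ?_
            have hcast : ((mgEdges β : ℝ) + 1) ≤ (m : ℝ) := by
              have : mgEdges β + 1 ≤ m := hlt
              exact_mod_cast this
            gcongr
        -- combine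
        have hC : (0:ℝ) ≤ ∏ e, ((α e).choose (β e) : ℝ) :=
          Finset.prod_nonneg fun e _ => by positivity
        have hmomnn : (0:ℝ) ≤ momX lam ρ (fun e => α e - β e) := by
          unfold momX; positivity
        rw [abs_mul, abs_mul, abs_of_nonneg hC, abs_of_nonneg hmomnn]
        unfold momX
        calc |κ β| * (∏ e, ((α e).choose (β e) : ℝ))
              * (lam ^ mgEdges (fun e => α e - β e) * ρ ^ (mgVerts (fun e => α e - β e)).ncard)
            ≤ ((m : ℝ) ^ (mgEdges β) * lam ^ (mgEdges β) * ρ ^ (mgVerts β).ncard)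
              * (∏ e, ((α e).choose (β e) : ℝ))
              * (lam ^ mgEdges (fun e => α e - β e) * ρ ^ (mgVerts (fun e => α e - β e)).ncard) :=
              mul_le_mul_of_nonneg_right (mul_le_mul_of_nonneg_right hkβ hC)
                (by positivity)
          _ = (∏ e, ((α e).choose (β e) : ℝ)) * (m : ℝ) ^ (mgEdges β)
              * (lam ^ m * ρ ^ ((mgVerts β).ncard + (mgVerts (fun e => α e - β e)).ncard)) := by
              rw [← hes, pow_add, pow_add]; ring
          _ ≤ (∏ e, ((α e).choose (β e) : ℝ)) * (m : ℝ) ^ (mgEdges β)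
              * (lam ^ m * ρ ^ (mgVerts α).ncard) :=
              mul_le_mul_of_nonneg_left
                (mul_le_mul_of_nonneg_left
                  (pow_le_pow_of_le_one hρ0.le hρ1 hv) (by positivity))
                (by positivity)
      -- total
      have h := hκ α
      have habs : |κ α| ≤ momxX lam ρ v1 α
          + ∑ β ∈ (Finset.Icc (0 : Sym2 (Fin n) → ℕ) α).erase α,
            (∏ e, ((α e).choose (β e) : ℝ)) * (m : ℝ) ^ (mgEdges β)
              * (lam ^ m * ρ ^ (mgVerts α).ncard) := by
        rw [h]
        refine (abs_sub _ _).trans ?_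
        gcongr
        · rw [abs_of_nonneg]; unfold momxX; positivity
        · exact (Finset.abs_sum_le_sum_abs _ _).trans
            (Finset.sum_le_sum hterm)
      -- evaluate the sum
      have hsum : ∑ β ∈ (Finset.Icc (0 : Sym2 (Fin n) → ℕ) α).erase α,
            (∏ e, ((α e).choose (β e) : ℝ)) * (m : ℝ) ^ (mgEdges β)
          = ((m : ℝ) + 1) ^ m - (m : ℝ) ^ m := by
        have hmem : α ∈ Finset.Icc (0 : Sym2 (Fin n) → ℕ) α := by
          rw [Finset.mem_Icc]; exact ⟨zero_le, le_refl _⟩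
        rw [Finset.sum_erase_eq_sub hmem]
        have hkey := key_choose_sum α m
        have hkeyR : ∑ β ∈ Finset.Icc (0 : Sym2 (Fin n) → ℕ) α,
            (∏ e, ((α e).choose (β e) : ℝ)) * (m : ℝ) ^ (mgEdges β)
              = ((m : ℝ) + 1) ^ m := by
          have := congrArg (Nat.cast : ℕ → ℝ) hkey
          push_cast at this
          convert this using 2
        rw [hkeyR]
        congr 1
        simp only [Nat.choose_self, Nat.cast_one, Finset.prod_const_one, one_mul]
        rw [← hmdef]
      rw [← Finset.sum_mul, hsum] at habs
      have hmom : momxX lam ρ v1 α ≤ lam ^ m * ρ ^ (mgVerts α).ncard := by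
        unfold momxX
        rw [← hmdef]
        exact mul_le_mul_of_nonneg_left
          (pow_le_pow_of_le_one hρ0.le hρ1
            (Set.ncard_le_ncard (Set.subset_insert _ _) (Set.toFinite _)))
          (by positivity)
      have hmm : (1:ℝ) ≤ (m : ℝ) ^ m := by
        calc (1:ℝ) = 1 ^ m := (one_pow m).symm
          _ ≤ (m:ℝ) ^ m := by gcongr; exact_mod_cast h1
      have hnn : (0:ℝ) ≤ lam ^ m * ρ ^ (mgVerts α).ncard := by positivity
      calc |κ α| ≤ momxX lam ρ v1 α
            + (((m : ℝ) + 1) ^ m - (m : ℝ) ^ m) * (lam ^ m * ρ ^ (mgVerts α).ncard) := habs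
        _ ≤ lam ^ m * ρ ^ (mgVerts α).ncard
            + (((m : ℝ) + 1) ^ m - (m : ℝ) ^ m) * (lam ^ m * ρ ^ (mgVerts α).ncard) := by
            gcongr
        _ = (1 + (((m : ℝ) + 1) ^ m - (m : ℝ) ^ m)) * (lam ^ m * ρ ^ (mgVerts α).ncard) := by
            ring
        _ ≤ ((m : ℝ) + 1) ^ m * (lam ^ m * ρ ^ (mgVerts α).ncard) := by
            gcongr
            linarith
        _ = ((m : ℝ) + 1) ^ m * lam ^ m * ρ ^ (mgVerts α).ncard := by ring
  intro α hα
  exact main (mgEdges α) α rfl hα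
end

section
/- In the planted submatrix setting, if the multigraph α has a nonempty connected component that does not contain vertex 1 (in particular, if α is disconnected), then κ_α = 0, where κ_α is defined by the recursion κ_α = E[x·X^α] − Σ_{0 ≤ β ⪇ α} κ_β·binom(α,β)·E[X^{α−β}] with base case κ_0 = E[x]. -/
variable {n : ℕ}

lemma mgEdges_add (γ δ : Sym2 (Fin n) → ℕ) :
    mgEdges (fun e => γ e + δ e) = mgEdges γ + mgEdges δ := by
  simp [mgEdges, Finset.sum_add_distrib]

lemma mgVerts_add (γ δ : Sym2 (Fin n) → ℕ) :
    mgVerts (fun e => γ e + δ e) = mgVerts γ ∪ mgVerts δ := by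
  ext v
  simp only [mgVerts, Set.mem_setOf_eq, Set.mem_union]
  constructor
  · rintro ⟨e, h, hv⟩
    by_cases hg : γ e = 0
    · exact Or.inr ⟨e, by omega, hv⟩
    · exact Or.inl ⟨e, hg, hv⟩
  · rintro (⟨e, h, hv⟩ | ⟨e, h, hv⟩)
    · exact ⟨e, by omega, hv⟩
    · exact ⟨e, by omega, hv⟩

lemma momX_add (lam ρ : ℝ) (γ δ : Sym2 (Fin n) → ℕ)
    (hd : Disjoint (mgVerts γ) (mgVerts δ)) :
    momX lam ρ (fun e => γ e + δ e) = momX lam ρ γ * momX lam ρ δ := by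
  unfold momX
  rw [mgEdges_add, mgVerts_add, Set.ncard_union_eq hd (Set.toFinite _) (Set.toFinite _),
    pow_add, pow_add]
  ring

lemma momxX_add (lam ρ : ℝ) (v1 : Fin n) (γ δ : Sym2 (Fin n) → ℕ)
    (hd : Disjoint (mgVerts γ) (mgVerts δ)) (hv : v1 ∉ mgVerts δ) :
    momxX lam ρ v1 (fun e => γ e + δ e) = momxX lam ρ v1 γ * momX lam ρ δ := by
  unfold momxX momX
  rw [mgEdges_add, mgVerts_add, ← Set.insert_union,
    Set.ncard_union_eq (Set.disjoint_left.mpr (by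
        rintro a (rfl | ha) hb
        · exact hv hb
        · exact Set.disjoint_left.mp hd ha hb))
      (Set.toFinite _) (Set.toFinite _), pow_add, pow_add]
  ring

lemma momX_zero (lam ρ : ℝ) : momX lam ρ (fun _ : Sym2 (Fin n) => 0) = 1 := by
  have h1 : mgEdges (fun _ : Sym2 (Fin n) => 0) = 0 := by simp [mgEdges]
  have h2 : mgVerts (fun _ : Sym2 (Fin n) => 0) = ∅ := by ext v; simp [mgVerts]
  simp [momX, h1, h2]


/-- **Lemma 3.2 (disconnected cumulants vanish).** If the multigraph `α` has a nonempty
connected component not containing vertex `1` (equivalently, some spanned vertex is not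
reachable from vertex `1`), then `κ_α = 0`. -/
theorem kappa_eq_zero_of_disconnected {n : ℕ} (hn : 0 < n) (lam ρ : ℝ)
    (hlam : 0 ≤ lam) (hρ0 : 0 < ρ) (hρ1 : ρ ≤ 1)
    (κ : (Sym2 (Fin n) → ℕ) → ℝ)
    (hκ : KappaRec lam ρ (⟨0, hn⟩ : Fin n) κ)
    (α : Sym2 (Fin n) → ℕ)
    (hdis : ∃ u ∈ mgVerts α,
      ¬ Relation.ReflTransGen (fun a b => α s(a, b) ≠ 0) (⟨0, hn⟩ : Fin n) u) :
    κ α = 0 := by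
  classical
  set v1 : Fin n := ⟨0, hn⟩
  clear_value v1
  clear hn
  suffices H : ∀ N (α : Sym2 (Fin n) → ℕ), mgEdges α = N →
      (∃ u ∈ mgVerts α,
        ¬ Relation.ReflTransGen (fun a b => α s(a, b) ≠ 0) v1 u) → κ α = 0 by
    exact H _ α rfl hdis
  intro N
  induction N using Nat.strong_induction_on with
  | _ N IH =>
  intro α hN hdis
  obtain ⟨u, hu, hur⟩ := hdis
  set R : Set (Fin n) := {v | Relation.ReflTransGen (fun a b => α s(a, b) ≠ 0) v1 v} with hRdef
  have hv1R : v1 ∈ R := Relation.ReflTransGen.refl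
  have hRclosed : ∀ a b : Fin n, α s(a, b) ≠ 0 → a ∈ R → b ∈ R :=
    fun a b h ha => Relation.ReflTransGen.tail ha h
  -- edge dichotomy
  have hdich : ∀ e : Sym2 (Fin n), α e ≠ 0 → (∀ v ∈ e, v ∈ R) ∨ (∀ v ∈ e, v ∉ R) := by
    intro e
    induction e using Sym2.ind with
    | _ a b =>
      intro he
      have he' : α s(b, a) ≠ 0 := by rwa [Sym2.eq_swap]
      by_cases ha : a ∈ R
      · left
        have hb : b ∈ R := hRclosed a b he ha
        intro v hv
        rcases Sym2.mem_iff.mp hv with rfl | rfl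
        · exact ha
        · exact hb
      · right
        have hb : b ∉ R := fun hbR => ha (hRclosed b a he' hbR)
        intro v hv hvR
        rcases Sym2.mem_iff.mp hv with rfl | rfl
        · exact ha hvR
        · exact hb hvR
  set α₁ : Sym2 (Fin n) → ℕ := fun e => if ∀ v ∈ e, v ∈ R then α e else 0 with hα₁def
  set α₂ : Sym2 (Fin n) → ℕ := fun e => α e - α₁ e with hα₂def
  have hle1 : ∀ e, α₁ e ≤ α e := by
    intro e
    show (if ∀ v ∈ e, v ∈ R then α e else 0) ≤ α e
    split <;> omega
  have hα₁pos : ∀ e, (∀ v ∈ e, v ∈ R) → α₁ e = α e := by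
    intro e h
    show (if ∀ v ∈ e, v ∈ R then α e else 0) = α e
    rw [if_pos h]
  have hα₁neg : ∀ e, ¬ (∀ v ∈ e, v ∈ R) → α₁ e = 0 := by
    intro e h
    show (if ∀ v ∈ e, v ∈ R then α e else 0) = 0
    rw [if_neg h]
  have hsum : ∀ e, α e = α₁ e + α₂ e := by
    intro e
    show α e = α₁ e + (α e - α₁ e)
    have := hle1 e
    omega
  have hV1R : mgVerts α₁ ⊆ R := by
    rintro v ⟨e, he, hv⟩
    by_cases h : ∀ w ∈ e, w ∈ R
    · exact h v hv
    · exact absurd (hα₁neg e h) he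
  have hV2R : ∀ v ∈ mgVerts α₂, v ∉ R := by
    rintro v ⟨e, he, hv⟩
    have he' : α e - α₁ e ≠ 0 := he
    have hαe : α e ≠ 0 := by omega
    rcases hdich e hαe with h | h
    · exfalso
      have := hα₁pos e h
      omega
    · exact h v hv
  have hdisj : Disjoint (mgVerts α₁) (mgVerts α₂) :=
    Set.disjoint_left.mpr fun v h1 h2 => hV2R v h2 (hV1R h1)
  have hv1not2 : v1 ∉ mgVerts α₂ := fun h => hV2R v1 h hv1R
  -- the witness edge outside R
  obtain ⟨e₀, he₀, hue₀⟩ := hu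
  have he₀R : ¬ ∀ v ∈ e₀, v ∈ R := fun h => hur (h u hue₀)
  have hα₁e₀ : α₁ e₀ = 0 := hα₁neg e₀ he₀R
  have hne : ∀ β : Sym2 (Fin n) → ℕ, β ≤ α₁ → β ≠ α := by
    intro β hβ hβα
    have h1 : β e₀ ≤ α₁ e₀ := hβ e₀
    rw [hβα, hα₁e₀] at h1
    exact he₀ (Nat.le_zero.mp h1)
  have hα₁leα : α₁ ≤ α := hle1
  -- the recursion for α
  rw [hκ α]
  set f : (Sym2 (Fin n) → ℕ) → ℝ := fun β =>
    κ β * (∏ e, ((α e).choose (β e) : ℝ)) * momX lam ρ (fun e => α e - β e) with hfdef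
  have hsplit := (Finset.sum_filter_add_sum_filter_not ((Finset.Icc 0 α).erase α)
    (fun β => β ≤ α₁) f).symm
  -- second part vanishes by IH
  have hzero : ∑ β ∈ ((Finset.Icc 0 α).erase α).filter (fun β => ¬ β ≤ α₁), f β = 0 := by
    apply Finset.sum_eq_zero
    intro β hβ
    rw [Finset.mem_filter, Finset.mem_erase, Finset.mem_Icc] at hβ
    obtain ⟨⟨hβα, _, hβle'⟩, hnle⟩ := hβ
    have hβle : ∀ e, β e ≤ α e := fun e => hβle' e
    have hlt : mgEdges β < N := by
      rw [← hN]
      apply Finset.sum_lt_sum (fun e _ => hβle e)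
      by_contra hc
      push_neg at hc
      exact hβα (funext fun e => le_antisymm (hβle e) (hc e (Finset.mem_univ e)))
    obtain ⟨e, he⟩ : ∃ e, ¬ β e ≤ α₁ e := by
      by_contra hc
      push_neg at hc
      exact hnle fun e => hc e
    have hβe : β e ≠ 0 := by
      have := hle1 e
      omega
    have heR : ¬ ∀ v ∈ e, v ∈ R := by
      intro h
      exact he ((hα₁pos e h).symm ▸ hβle e)
    push_neg at heR
    obtain ⟨w, hw, hwR⟩ := heR
    have hz : κ β = 0 := by
      apply IH _ hlt β rfl
      refine ⟨w, ⟨e, hβe, hw⟩, fun hreach => hwR ?_⟩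
      exact Relation.ReflTransGen.mono (p := fun a b => α s(a, b) ≠ 0) (fun a b hab => fun h0 => hab (by have := hβle s(a, b); omega)) _ _ hreach
    simp [hfdef, hz]
  -- filter equals Icc 0 α₁
  have hfil : ((Finset.Icc 0 α).erase α).filter (fun β => β ≤ α₁) = Finset.Icc 0 α₁ := by
    ext β
    constructor
    · intro hmem
      rw [Finset.mem_filter] at hmem
      exact Finset.mem_Icc.mpr ⟨zero_le, hmem.2⟩
    · intro hmem
      rw [Finset.mem_Icc] at hmem
      rw [Finset.mem_filter, Finset.mem_erase, Finset.mem_Icc]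
      exact ⟨⟨hne β hmem.2, zero_le, le_trans hmem.2 hα₁leα⟩, hmem.2⟩
  -- per-term rewriting on Icc 0 α₁
  have hterm : ∀ β ∈ Finset.Icc 0 α₁, f β =
      (κ β * (∏ e, ((α₁ e).choose (β e) : ℝ)) * momX lam ρ (fun e => α₁ e - β e))
        * momX lam ρ α₂ := by
    intro β hβ
    rw [Finset.mem_Icc] at hβ
    have hβ1 : ∀ e, β e ≤ α₁ e := fun e => hβ.2 e
    have hchoose : (∏ e, ((α e).choose (β e) : ℝ)) = ∏ e, ((α₁ e).choose (β e) : ℝ) := by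
      apply Finset.prod_congr rfl
      intro e _
      by_cases h : ∀ v ∈ e, v ∈ R
      · rw [hα₁pos e h]
      · have h1 : α₁ e = 0 := hα₁neg e h
        have h2 : β e = 0 := by have := hβ1 e; omega
        rw [h1, h2]
        simp
    have hmom : momX lam ρ (fun e => α e - β e) =
        momX lam ρ (fun e => α₁ e - β e) * momX lam ρ α₂ := by
      have heq : (fun e => α e - β e) = fun e => (α₁ e - β e) + α₂ e := by
        funext e
        show α e - β e = (α₁ e - β e) + (α e - α₁ e)
        have h1 := hle1 e
        have h2 := hβ1 e
        omega
      rw [heq]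
      apply momX_add
      apply Set.disjoint_left.mpr
      rintro v ⟨e, he, hv⟩ h2
      have he' : α₁ e - β e ≠ 0 := he
      exact hV2R v h2 (hV1R ⟨e, by omega, hv⟩)
    simp only [hfdef]
    rw [hchoose, hmom]
    ring
  -- momxX factorization
  have hmomxX : momxX lam ρ v1 α = momxX lam ρ v1 α₁ * momX lam ρ α₂ := by
    have heq : α = fun e => α₁ e + α₂ e := funext hsum
    rw [heq]
    exact momxX_add lam ρ v1 α₁ α₂ hdisj hv1not2
  -- α₁ term at the top of Icc
  have hmem : α₁ ∈ Finset.Icc 0 α₁ := Finset.mem_Icc.mpr ⟨zero_le, le_refl _⟩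
  have hsum2 : ∑ β ∈ Finset.Icc 0 α₁,
      (κ β * (∏ e, ((α₁ e).choose (β e) : ℝ)) * momX lam ρ (fun e => α₁ e - β e)) =
      (∑ β ∈ (Finset.Icc 0 α₁).erase α₁,
        κ β * (∏ e, ((α₁ e).choose (β e) : ℝ)) * momX lam ρ (fun e => α₁ e - β e)) + κ α₁ := by
    rw [← Finset.sum_erase_add _ _ hmem]
    congr 1
    have h1 : (∏ e, (((α₁ e).choose (α₁ e)) : ℝ)) = 1 := by
      simp [Nat.choose_self]
    have h2 : (fun e => α₁ e - α₁ e) = fun _ : Sym2 (Fin n) => 0 := by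
      funext e
      omega
    rw [h1, h2, momX_zero]
    ring
  have hκα₁ := hκ α₁
  calc momxX lam ρ v1 α - ∑ β ∈ (Finset.Icc 0 α).erase α, f β
      = momxX lam ρ v1 α₁ * momX lam ρ α₂
        - ∑ β ∈ Finset.Icc 0 α₁,
            (κ β * (∏ e, ((α₁ e).choose (β e) : ℝ)) * momX lam ρ (fun e => α₁ e - β e))
          * momX lam ρ α₂ := by
        rw [hmomxX, hsplit, hzero, add_zero, hfil, Finset.sum_congr rfl hterm]
    _ = 0 := by
        rw [← Finset.sum_mul, hsum2, hκα₁]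
        ring
end

section
/- Suppose λ ≤ √(r/(e·ρ²·n)) for some 0 < r < 1, and let κ_α be the planted-submatrix cumulants. If α is connected, spans vertex 1, and 1 ≤ |α| ≤ log₂(1/ρ) − 1, then (1/2)·λ^{|α|}·ρ^{|V(α)|} ≤ κ_α ≤ λ^{|α|}·ρ^{|V(α)|}. -/
variable {n : ℕ}

namespace KappaAux

lemma sym2_exists_mem (e : Sym2 (Fin n)) : ∃ a, a ∈ e := by
  induction e using Sym2.ind with | _ a b => exact ⟨a, Sym2.mem_mk_left a b⟩

lemma mgEdges_zero : mgEdges (fun _ : Sym2 (Fin n) => 0) = 0 := by simp [mgEdges]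

lemma mgVerts_zero : mgVerts (fun _ : Sym2 (Fin n) => 0) = ∅ := by
  ext v; simp [mgVerts]

lemma momX_zero (lam ρ : ℝ) : momX lam ρ (fun _ : Sym2 (Fin n) => 0) = 1 := by
  simp [momX, mgEdges_zero, mgVerts_zero]

lemma mgVerts_subset {β α : Sym2 (Fin n) → ℕ} (h : ∀ e, β e ≠ 0 → α e ≠ 0) :
    mgVerts β ⊆ mgVerts α := fun v ⟨e, he, hv⟩ => ⟨e, h e he, hv⟩

lemma mgEdges_addfun (f g : Sym2 (Fin n) → ℕ) :
    mgEdges (fun e => f e + g e) = mgEdges f + mgEdges g := by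
  simp [mgEdges, Finset.sum_add_distrib]

lemma mgVerts_addfun (f g : Sym2 (Fin n) → ℕ) :
    mgVerts (fun e => f e + g e) = mgVerts f ∪ mgVerts g := by
  ext v
  constructor
  · rintro ⟨e, he, hv⟩
    have he' : f e + g e ≠ 0 := he
    rcases Nat.eq_zero_or_pos (f e) with h | h
    · exact Or.inr ⟨e, by omega, hv⟩
    · exact Or.inl ⟨e, by omega, hv⟩
  · rintro (⟨e, he, hv⟩ | ⟨e, he, hv⟩) <;>
      exact ⟨e, by show f e + g e ≠ 0; omega, hv⟩

lemma momX_mul (lam ρ : ℝ) (f g : Sym2 (Fin n) → ℕ)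
    (hd : Disjoint (mgVerts f) (mgVerts g)) :
    momX lam ρ (fun e => f e + g e) = momX lam ρ f * momX lam ρ g := by
  unfold momX
  rw [mgEdges_addfun, mgVerts_addfun, Set.ncard_union_eq hd, pow_add, pow_add]
  ring

lemma momxX_mul (lam ρ : ℝ) (v1 : Fin n) (f g : Sym2 (Fin n) → ℕ)
    (hd : Disjoint (insert v1 (mgVerts f)) (mgVerts g)) :
    momxX lam ρ v1 (fun e => f e + g e) = momxX lam ρ v1 f * momX lam ρ g := by
  unfold momxX momX
  rw [mgEdges_addfun, mgVerts_addfun, ← Set.insert_union, Set.ncard_union_eq hd,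
    pow_add, pow_add]
  ring

lemma mgEdges_lt {β α : Sym2 (Fin n) → ℕ} (hle : β ≤ α) (hne : β ≠ α) :
    mgEdges β < mgEdges α := by
  have hex : ∃ e, β e < α e := by
    by_contra h
    push_neg at h
    exact hne (funext fun e => le_antisymm (hle e) (h e))
  obtain ⟨e0, he0⟩ := hex
  exact Finset.sum_lt_sum (fun e _ => hle e) ⟨e0, Finset.mem_univ _, he0⟩

lemma mgEdges_pos {β : Sym2 (Fin n) → ℕ} (hne : β ≠ (0 : Sym2 (Fin n) → ℕ)) :
    1 ≤ mgEdges β := by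
  rcases Nat.eq_zero_or_pos (mgEdges β) with h | h
  · exfalso
    apply hne
    funext e
    have := (Finset.sum_eq_zero_iff.1 h) e (Finset.mem_univ e)
    simpa using this
  · exact h

lemma fullsum {lam ρ : ℝ} {v1 : Fin n} {κ : (Sym2 (Fin n) → ℕ) → ℝ}
    (hκ : KappaRec lam ρ v1 κ) (δ : Sym2 (Fin n) → ℕ) :
    ∑ γ ∈ Finset.Icc 0 δ,
        κ γ * (∏ e, ((δ e).choose (γ e) : ℝ)) * momX lam ρ (fun e => δ e - γ e)
      = momxX lam ρ v1 δ := by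
  classical
  have hmem : δ ∈ Finset.Icc 0 δ := by simp
  rw [← Finset.sum_erase_add _ _ hmem]
  have h1 : momX lam ρ (fun e => δ e - δ e) = 1 := by
    have : (fun e : Sym2 (Fin n) => δ e - δ e) = (fun _ => 0) := by funext e; simp
    rw [this, momX_zero]
  have h2 : (∏ e, ((δ e).choose (δ e) : ℝ)) = 1 := by simp
  rw [h1, h2, hκ δ]
  ring

lemma kappa_zero {lam ρ : ℝ} {v1 : Fin n} {κ : (Sym2 (Fin n) → ℕ) → ℝ}
    (hκ : KappaRec lam ρ v1 κ) : κ 0 = ρ := by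
  classical
  have h := hκ 0
  have he : (Finset.Icc (0 : Sym2 (Fin n) → ℕ) 0).erase 0 = ∅ := by
    simp
  rw [he] at h
  simp only [Finset.sum_empty, sub_zero] at h
  rw [h]
  unfold momxX
  have h0 : mgEdges (0 : Sym2 (Fin n) → ℕ) = 0 := mgEdges_zero
  have h1 : mgVerts (0 : Sym2 (Fin n) → ℕ) = ∅ := mgVerts_zero
  rw [h0, h1]
  simp

/-- If every edge of `δ` has endpoints entirely in `S` or entirely outside `S`,
then a path starting in `S` stays in `S`. -/
lemma stay {S : Set (Fin n)} {δ : Sym2 (Fin n) → ℕ}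
    (hc : ∀ e, δ e ≠ 0 → (∀ v ∈ e, v ∈ S) ∨ (∀ v ∈ e, v ∉ S))
    {a b : Fin n} (ha : a ∈ S)
    (h : Relation.ReflTransGen (fun x y => δ s(x, y) ≠ 0) a b) : b ∈ S := by
  induction h with
  | refl => exact ha
  | tail h1 h2 ih =>
    rcases hc _ h2 with h | h
    · exact h _ (Sym2.mem_mk_right _ _)
    · exact absurd ih (h _ (Sym2.mem_mk_left _ _))

/-- The set of vertices reachable from `v1` along edges of `β`. -/
def reach (β : Sym2 (Fin n) → ℕ) (v1 : Fin n) : Set (Fin n) :=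
  {u | Relation.ReflTransGen (fun a b => β s(a, b) ≠ 0) v1 u}

lemma reach_refl (β : Sym2 (Fin n) → ℕ) (v1 : Fin n) : v1 ∈ reach β v1 :=
  Relation.ReflTransGen.refl

lemma edge_symm (β : Sym2 (Fin n) → ℕ) :
    Symmetric (fun a b : Fin n => β s(a, b) ≠ 0) := by
  intro a b h
  show β s(b, a) ≠ 0
  rwa [Sym2.eq_swap]

lemma reach_closed (β : Sym2 (Fin n) → ℕ) (v1 : Fin n) :
    ∀ e, β e ≠ 0 → (∀ v ∈ e, v ∈ reach β v1) ∨ (∀ v ∈ e, v ∉ reach β v1) := by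
  intro e
  induction e using Sym2.ind with
  | _ a b =>
    intro hβe
    by_cases ha : a ∈ reach β v1
    · left
      intro v hv
      rcases Sym2.mem_iff.1 hv with rfl | rfl
      · exact ha
      · exact Relation.ReflTransGen.tail ha hβe
    · right
      intro v hv hvS
      rcases Sym2.mem_iff.1 hv with rfl | rfl
      · exact ha hvS
      · exact ha (Relation.ReflTransGen.tail hvS (edge_symm β hβe))

lemma reach_out {β : Sym2 (Fin n) → ℕ} {v1 : Fin n} (hne : β ≠ 0)
    (hnc : ¬(mgConnected β ∧ v1 ∈ mgVerts β)) :
    ∃ e, β e ≠ 0 ∧ ¬(∀ v ∈ e, v ∈ reach β v1) := by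
  by_cases hv1V : v1 ∈ mgVerts β
  · by_contra hall
    push_neg at hall
    apply hnc
    refine ⟨?_, hv1V⟩
    intro u hu w hw
    obtain ⟨eu, heu, hue⟩ := hu
    obtain ⟨ew, hew, hwe⟩ := hw
    have hu' : u ∈ reach β v1 := hall eu heu u hue
    have hw' : w ∈ reach β v1 := hall ew hew w hwe
    haveI : Std.Symm (fun a b : Fin n => β s(a, b) ≠ 0) := ⟨fun a b h => edge_symm β h⟩
    have hsym := fun {a b : Fin n} (h : Relation.ReflTransGen (fun a b => β s(a, b) ≠ 0) a b) => Std.Symm.symm a b h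
    exact (hsym hu').trans hw'
  · have hβne : ∃ e, β e ≠ 0 := by
      by_contra h; push_neg at h; exact hne (funext fun e => h e)
    obtain ⟨e0, he0⟩ := hβne
    refine ⟨e0, he0, ?_⟩
    intro h
    obtain ⟨a, ha⟩ := sym2_exists_mem e0
    rcases (h a ha).cases_head with heq | ⟨c, hc, _⟩
    · exact hv1V ⟨e0, he0, heq ▸ ha⟩
    · exact hv1V ⟨s(v1, c), hc, Sym2.mem_mk_left _ _⟩

lemma kappa_split {lam ρ : ℝ} {v1 : Fin n} {κ : (Sym2 (Fin n) → ℕ) → ℝ}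
    (hκ : KappaRec lam ρ v1 κ)
    (S : Set (Fin n)) (β : Sym2 (Fin n) → ℕ)
    (hv1S : v1 ∈ S)
    (hclosed : ∀ e, β e ≠ 0 → (∀ v ∈ e, v ∈ S) ∨ (∀ v ∈ e, v ∉ S))
    (hout : ∃ e, β e ≠ 0 ∧ ¬(∀ v ∈ e, v ∈ S))
    (ihz : ∀ γ, γ ≤ β → γ ≠ β → γ ≠ 0 →
      ¬(mgConnected γ ∧ v1 ∈ mgVerts γ) → κ γ = 0) :
    κ β = 0 := by
  classical
  set β1 : Sym2 (Fin n) → ℕ := fun e => if (∀ v ∈ e, v ∈ S) then β e else 0 with hβ1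
  set β2 : Sym2 (Fin n) → ℕ := fun e => if (∀ v ∈ e, v ∈ S) then 0 else β e with hβ2
  have hb1in : ∀ e, (∀ v ∈ e, v ∈ S) → β1 e = β e := by
    intro e h; simp only [hβ1]; exact if_pos h
  have hb1out : ∀ e, ¬(∀ v ∈ e, v ∈ S) → β1 e = 0 := by
    intro e h; simp only [hβ1]; exact if_neg h
  have hb2in : ∀ e, (∀ v ∈ e, v ∈ S) → β2 e = 0 := by
    intro e h; simp only [hβ2]; exact if_pos h
  have hb2out : ∀ e, ¬(∀ v ∈ e, v ∈ S) → β2 e = β e := by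
    intro e h; simp only [hβ2]; exact if_neg h
  have hsplit : ∀ e, β e = β1 e + β2 e := by
    intro e
    by_cases h : (∀ v ∈ e, v ∈ S)
    · rw [hb1in e h, hb2in e h]
      omega
    · rw [hb1out e h, hb2out e h]
      omega
  have hβ1le : β1 ≤ β := by
    intro e
    by_cases h : (∀ v ∈ e, v ∈ S)
    · rw [hb1in e h]
    · rw [hb1out e h]; exact zero_le
  have hV1 : mgVerts β1 ⊆ S := by
    rintro v ⟨e, he, hv⟩
    by_cases h : (∀ v ∈ e, v ∈ S)
    · exact h v hv
    · exact absurd (hb1out e h) he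
  have hV2 : ∀ v ∈ mgVerts β2, v ∉ S := by
    rintro v ⟨e, he, hv⟩
    by_cases h : (∀ v ∈ e, v ∈ S)
    · exact absurd (hb2in e h) he
    · have hβe : β e ≠ 0 := by rw [← hb2out e h]; exact he
      rcases hclosed e hβe with hin | hout2
      · exact absurd hin h
      · exact hout2 v hv
  obtain ⟨e0, he0, he0out⟩ := hout
  have hβ1e0 : β1 e0 = 0 := hb1out e0 he0out
  have hnle : ¬ β ≤ β1 := by
    intro h
    have h2 : β e0 ≤ β1 e0 := h e0
    rw [hβ1e0] at h2
    omega
  have hsub : Finset.Icc 0 β1 ⊆ Finset.Icc 0 β :=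
    Finset.Icc_subset_Icc le_rfl hβ1le
  have key := fullsum hκ β
  rw [← Finset.sum_sdiff hsub] at key
  have hpart1 : ∑ γ ∈ Finset.Icc 0 β1,
      κ γ * (∏ e, ((β e).choose (γ e) : ℝ)) * momX lam ρ (fun e => β e - γ e)
      = momxX lam ρ v1 β1 * momX lam ρ β2 := by
    rw [← fullsum hκ β1, Finset.sum_mul]
    apply Finset.sum_congr rfl
    intro γ hγ
    have hγle : γ ≤ β1 := (Finset.mem_Icc.1 hγ).2
    have hγ0 : ∀ e, ¬(∀ v ∈ e, v ∈ S) → γ e = 0 := by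
      intro e h
      have h2 : γ e ≤ β1 e := hγle e
      have h3 : β1 e = 0 := hb1out e h
      omega
    have hbinom : (∏ e, ((β e).choose (γ e) : ℝ)) = ∏ e, ((β1 e).choose (γ e) : ℝ) := by
      apply Finset.prod_congr rfl
      intro e _
      by_cases h : (∀ v ∈ e, v ∈ S)
      · rw [hb1in e h]
      · rw [hγ0 e h, hb1out e h]
        simp
    have hfun : (fun e => β e - γ e) = (fun e => (β1 e - γ e) + β2 e) := by
      funext e
      by_cases h : (∀ v ∈ e, v ∈ S)
      · rw [hb1in e h, hb2in e h]
        omega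
      · rw [hγ0 e h, hb1out e h, hb2out e h]
        simp
    have hdisj : Disjoint (mgVerts (fun e => β1 e - γ e)) (mgVerts β2) := by
      rw [Set.disjoint_left]
      intro v hv1' hv2'
      have hvS : v ∈ S := hV1 (mgVerts_subset (fun e he => by
        have h3 : β1 e - γ e ≠ 0 := he; omega) hv1')
      exact hV2 v hv2' hvS
    rw [hbinom, hfun, momX_mul lam ρ _ _ hdisj]
    ring
  have hβmem : β ∈ Finset.Icc 0 β \ Finset.Icc 0 β1 := by
    rw [Finset.mem_sdiff]
    refine ⟨by simp, ?_⟩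
    rw [Finset.mem_Icc]
    rintro ⟨-, h⟩
    exact hnle h
  have hside : ∀ γ ∈ Finset.Icc 0 β \ Finset.Icc 0 β1, γ ≠ β →
      κ γ * (∏ e, ((β e).choose (γ e) : ℝ)) * momX lam ρ (fun e => β e - γ e) = 0 := by
    intro γ hγ hγβ
    rw [Finset.mem_sdiff, Finset.mem_Icc] at hγ
    obtain ⟨⟨-, hγle⟩, hγnot⟩ := hγ
    have hnle2 : ¬ γ ≤ β1 := fun h => hγnot (Finset.mem_Icc.2 ⟨zero_le, h⟩)
    have hex : ∃ e, β1 e < γ e := by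
      by_contra h; push_neg at h; exact hnle2 h
    obtain ⟨e1, he1⟩ := hex
    have hout1 : ¬ (∀ v ∈ e1, v ∈ S) := by
      intro h
      have h3 : β1 e1 = β e1 := hb1in e1 h
      have h2 : γ e1 ≤ β e1 := hγle e1
      omega
    have hβ1z : β1 e1 = 0 := hb1out e1 hout1
    have hγe1 : γ e1 ≠ 0 := by omega
    have hβe1 : β e1 ≠ 0 := by have h2 : γ e1 ≤ β e1 := hγle e1; omega
    have hallout : ∀ v ∈ e1, v ∉ S := by
      rcases hclosed e1 hβe1 with h | h
      · exact absurd h hout1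
      · exact h
    have hγne0 : γ ≠ 0 := by
      intro h
      rw [h] at hγe1
      exact hγe1 rfl
    have hznc : ¬(mgConnected γ ∧ v1 ∈ mgVerts γ) := by
      rintro ⟨hc, hv⟩
      obtain ⟨w, hw⟩ := sym2_exists_mem e1
      have hwγ : w ∈ mgVerts γ := ⟨e1, hγe1, hw⟩
      have hγclosed : ∀ e, γ e ≠ 0 → (∀ v ∈ e, v ∈ S) ∨ (∀ v ∈ e, v ∉ S) := by
        intro e he
        apply hclosed
        have h2 : γ e ≤ β e := hγle e
        omega
      have hwS := stay hγclosed hv1S (hc v1 hv w hwγ)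
      exact hallout w hw hwS
    rw [ihz γ hγle hγβ hγne0 hznc]
    ring
  have hpart2 : ∑ γ ∈ Finset.Icc 0 β \ Finset.Icc 0 β1,
      κ γ * (∏ e, ((β e).choose (γ e) : ℝ)) * momX lam ρ (fun e => β e - γ e) = κ β := by
    rw [Finset.sum_eq_single_of_mem β hβmem hside]
    have h1 : momX lam ρ (fun e => β e - β e) = 1 := by
      have h2 : (fun e : Sym2 (Fin n) => β e - β e) = (fun _ => 0) := by funext e; simp
      rw [h2, momX_zero]
    rw [h1]
    simp
  have hβfun : momxX lam ρ v1 β = momxX lam ρ v1 β1 * momX lam ρ β2 := by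
    have hfun : β = (fun e => β1 e + β2 e) := funext hsplit
    have hdisj : Disjoint (insert v1 (mgVerts β1)) (mgVerts β2) := by
      rw [Set.disjoint_left]
      intro v hv hv2'
      rcases Set.mem_insert_iff.1 hv with rfl | hv'
      · exact hV2 v hv2' hv1S
      · exact hV2 v hv2' (hV1 hv')
    calc momxX lam ρ v1 β = momxX lam ρ v1 (fun e => β1 e + β2 e) := by rw [← hfun]
      _ = momxX lam ρ v1 β1 * momX lam ρ β2 := momxX_mul lam ρ v1 β1 β2 hdisj
  rw [hpart2, hpart1, hβfun] at key
  linear_combination key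

/-- Vanishing of cumulants of multigraphs that are disconnected or miss `v1`. -/
lemma vanish {lam ρ : ℝ} {v1 : Fin n} {κ : (Sym2 (Fin n) → ℕ) → ℝ}
    (hκ : KappaRec lam ρ v1 κ) :
    ∀ N (β : Sym2 (Fin n) → ℕ), mgEdges β ≤ N → β ≠ 0 →
      ¬(mgConnected β ∧ v1 ∈ mgVerts β) → κ β = 0 := by
  intro N
  induction N with
  | zero =>
    intro β h0 hne _
    have := mgEdges_pos hne
    omega
  | succ N ih =>
    intro β hle hne hnc
    apply kappa_split hκ (reach β v1) β (reach_refl β v1) (reach_closed β v1)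
      (reach_out hne hnc)
    intro γ hγle hγβ hγ0 hγnc
    exact ih γ (by have := mgEdges_lt hγle hγβ; omega) hγ0 hγnc

/-- Key connectivity fact: a proper nontrivial split of a connected multigraph
shares a vertex between the two parts. -/
lemma verts_inter_nonempty {α β : Sym2 (Fin n) → ℕ} (hconn : mgConnected α)
    (hβα : β ≤ α) (hβ0 : β ≠ 0) (hβα' : β ≠ α) :
    ((mgVerts β) ∩ (mgVerts (fun e => α e - β e))).Nonempty := by
  set δ : Sym2 (Fin n) → ℕ := fun e => α e - β e with hδ
  by_contra hno
  rw [Set.not_nonempty_iff_eq_empty, ← Set.disjoint_iff_inter_eq_empty] at hno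
  -- pick u in V(β), w in V(δ)
  have hβne : ∃ e, β e ≠ 0 := by
    by_contra h; push_neg at h; exact hβ0 (funext fun e => h e)
  have hδne : ∃ e, δ e ≠ 0 := by
    have hex : ∃ e, β e < α e := by
      by_contra h
      push_neg at h
      exact hβα' (funext fun e => le_antisymm (hβα e) (h e))
    obtain ⟨e, he⟩ := hex
    exact ⟨e, by simp only [hδ]; omega⟩
  obtain ⟨eu, heu⟩ := hβne
  obtain ⟨u, hu⟩ := sym2_exists_mem eu
  obtain ⟨ew, hew⟩ := hδne
  obtain ⟨w, hw⟩ := sym2_exists_mem ew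
  have huβ : u ∈ mgVerts β := ⟨eu, heu, hu⟩
  have hwδ : w ∈ mgVerts δ := ⟨ew, hew, hw⟩
  have huα : u ∈ mgVerts α := mgVerts_subset (fun e he => by have h2 : β e ≤ α e := hβα e; omega) huβ
  have hwα : w ∈ mgVerts α := mgVerts_subset (fun e he => by
    have : α e - β e ≠ 0 := he; omega) hwδ
  have hpath := hconn u huα w hwα
  -- every α-edge is fully in V(β) or fully outside V(β)
  have hc : ∀ e, α e ≠ 0 → (∀ v ∈ e, v ∈ mgVerts β) ∨ (∀ v ∈ e, v ∉ mgVerts β) := by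
    intro e he
    rcases Nat.eq_zero_or_pos (β e) with h | h
    · right
      intro v hv hvβ
      have hvδ : v ∈ mgVerts δ := ⟨e, by simp only [hδ]; omega, hv⟩
      exact (hno.le_bot ⟨hvβ, hvδ⟩ : False)
    · left
      intro v hv
      exact ⟨e, by omega, hv⟩
  have hwβ : w ∈ mgVerts β := stay hc huβ hpath
  exact hno.le_bot ⟨hwβ, hwδ⟩

lemma key_card {α β : Sym2 (Fin n) → ℕ} (hconn : mgConnected α)
    (hβα : β ≤ α) (hβ0 : β ≠ 0) (hβα' : β ≠ α) :
    (mgVerts α).ncard + 1 ≤ (mgVerts β).ncard + (mgVerts (fun e => α e - β e)).ncard := by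
  set δ : Sym2 (Fin n) → ℕ := fun e => α e - β e with hδ
  have hunion : mgVerts β ∪ mgVerts δ = mgVerts α := by
    apply Set.Subset.antisymm
    · apply Set.union_subset
      · exact mgVerts_subset (fun e he => by have h2 : β e ≤ α e := hβα e; omega)
      · exact mgVerts_subset (fun e he => by have : α e - β e ≠ 0 := he; omega)
    · rintro v ⟨e, he, hv⟩
      rcases Nat.eq_zero_or_pos (β e) with h | h
      · exact Or.inr ⟨e, by simp only [hδ]; omega, hv⟩
      · exact Or.inl ⟨e, by omega, hv⟩
  have hcard := Set.ncard_union_add_ncard_inter (mgVerts β) (mgVerts δ)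
  rw [hunion] at hcard
  have hne := verts_inter_nonempty hconn hβα hβ0 hβα'
  have hpos : 1 ≤ (mgVerts β ∩ mgVerts δ).ncard :=
    (Set.ncard_pos (Set.toFinite _)).2 hne
  omega

lemma sum_choose (α : Sym2 (Fin n) → ℕ) :
    ∑ β ∈ Finset.Icc 0 α, ∏ e, (α e).choose (β e) = 2 ^ mgEdges α := by
  classical
  rw [show Finset.Icc 0 α = Fintype.piFinset (fun e => Finset.Icc 0 (α e)) from by
        ext x; simp [Fintype.mem_piFinset, Pi.le_def]]
  rw [← Finset.prod_univ_sum]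
  rw [mgEdges, ← Finset.prod_pow_eq_pow_sum]
  apply Finset.prod_congr rfl
  intro e _
  rw [show Finset.Icc 0 (α e) = Finset.range (α e + 1) from by
        ext x; simp [Nat.lt_succ_iff]]
  exact Nat.sum_range_choose (α e)

lemma main_bound {lam ρ : ℝ} {v1 : Fin n} {κ : (Sym2 (Fin n) → ℕ) → ℝ}
    (hκ : KappaRec lam ρ v1 κ) (hlam0 : 0 ≤ lam) (hρ0 : 0 < ρ) (hρ1 : ρ < 1) :
    ∀ N (α : Sym2 (Fin n) → ℕ), mgEdges α ≤ N →
      mgConnected α → v1 ∈ mgVerts α → 1 ≤ mgEdges α →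
      (mgEdges α : ℝ) ≤ Real.logb 2 (1/ρ) - 1 →
      (1/2) * momX lam ρ α ≤ κ α ∧ κ α ≤ momX lam ρ α := by
  intro N
  induction N with
  | zero =>
    intro α h0 _ _ h1 _
    omega
  | succ N ih =>
    intro α hle hconn hv1 h1 h2
    classical
    have hmomnn : ∀ γ : Sym2 (Fin n) → ℕ, 0 ≤ momX lam ρ γ := by
      intro γ
      unfold momX
      positivity
    -- ρ · 2^d ≤ 1/2
    have hρ2 : ρ * 2 ^ mgEdges α ≤ 1 / 2 := by
      have h2' : (mgEdges α : ℝ) + 1 ≤ Real.logb 2 (1/ρ) := by linarith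
      have hbpos : (0:ℝ) < 1/ρ := by positivity
      have hkey : (2:ℝ) ^ ((mgEdges α : ℝ) + 1) ≤ (2:ℝ) ^ Real.logb 2 (1/ρ) :=
        Real.rpow_le_rpow_of_exponent_le (by norm_num) h2'
      rw [Real.rpow_logb (by norm_num) (by norm_num) hbpos] at hkey
      have hcast : (2:ℝ) ^ ((mgEdges α : ℝ) + 1) = 2 ^ (mgEdges α + 1) := by
        rw [show ((mgEdges α : ℝ) + 1) = ((mgEdges α + 1 : ℕ) : ℝ) by push_cast; ring,
          Real.rpow_natCast]
      rw [hcast, pow_succ] at hkey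
      have h3 : ρ * (2 ^ mgEdges α * 2) ≤ ρ * (1/ρ) :=
        mul_le_mul_of_nonneg_left hkey hρ0.le
      rw [mul_one_div_cancel hρ0.ne'] at h3
      linarith
    have hα0 : α ≠ 0 := by
      intro h
      rw [h] at h1
      simp [mgEdges] at h1
    have h0mem : (0 : Sym2 (Fin n) → ℕ) ∈ (Finset.Icc 0 α).erase α :=
      Finset.mem_erase.2 ⟨Ne.symm hα0, by simp⟩
    have hT0 : κ (0 : Sym2 (Fin n) → ℕ) * (∏ e, ((α e).choose ((0:Sym2 (Fin n) → ℕ) e) : ℝ))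
        * momX lam ρ (fun e => α e - (0:Sym2 (Fin n) → ℕ) e) = ρ * momX lam ρ α := by
      rw [kappa_zero hκ]
      have hb : (∏ e, ((α e).choose ((0:Sym2 (Fin n) → ℕ) e) : ℝ)) = 1 := by simp
      have hf : (fun e => α e - (0:Sym2 (Fin n) → ℕ) e) = α := by funext e; simp
      rw [hb, hf]
      ring
    -- bounds on individual terms
    have hTbound : ∀ β ∈ (Finset.Icc 0 α).erase α, β ≠ 0 →
        0 ≤ κ β * (∏ e, ((α e).choose (β e) : ℝ)) * momX lam ρ (fun e => α e - β e) ∧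
        κ β * (∏ e, ((α e).choose (β e) : ℝ)) * momX lam ρ (fun e => α e - β e)
          ≤ (∏ e, ((α e).choose (β e) : ℝ)) *
              (lam ^ mgEdges α * (ρ ^ ((mgVerts α).ncard) * ρ)) := by
      intro β hβE hβ0
      rw [Finset.mem_erase, Finset.mem_Icc] at hβE
      obtain ⟨hβα', -, hβα⟩ := hβE
      have hBnn : (0:ℝ) ≤ ∏ e, ((α e).choose (β e) : ℝ) := by positivity
      have hCnn : (0:ℝ) ≤ lam ^ mgEdges α * (ρ ^ ((mgVerts α).ncard) * ρ) := by positivity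
      by_cases hc : mgConnected β ∧ v1 ∈ mgVerts β
      · have he1 : 1 ≤ mgEdges β := mgEdges_pos hβ0
        have helt : mgEdges β < mgEdges α := mgEdges_lt hβα hβα'
        have hihd : (mgEdges β : ℝ) ≤ Real.logb 2 (1/ρ) - 1 := by
          have hle2 : (mgEdges β : ℝ) ≤ (mgEdges α : ℝ) := by exact_mod_cast helt.le
          linarith
        obtain ⟨hlo, hhi⟩ := ih β (by omega) hc.1 hc.2 he1 hihd
        have hκβnn : 0 ≤ κ β := by
          have := hmomnn β
          linarith
        constructor
        · exact mul_nonneg (mul_nonneg hκβnn hBnn) (hmomnn _)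
        · have hedge : mgEdges β + mgEdges (fun e => α e - β e) = mgEdges α := by
            unfold mgEdges
            rw [← Finset.sum_add_distrib]
            apply Finset.sum_congr rfl
            intro e _
            have h4 : β e ≤ α e := hβα e
            omega
          have hcard := key_card hconn hβα hβ0 hβα'
          have hmm : momX lam ρ β * momX lam ρ (fun e => α e - β e)
              ≤ lam ^ mgEdges α * (ρ ^ ((mgVerts α).ncard) * ρ) := by
            unfold momX
            have e1 : lam ^ mgEdges β * ρ ^ (mgVerts β).ncard *
                (lam ^ mgEdges (fun e => α e - β e) *
                  ρ ^ (mgVerts (fun e => α e - β e)).ncard)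
                = lam ^ mgEdges α *
                    ρ ^ ((mgVerts β).ncard + (mgVerts (fun e => α e - β e)).ncard) := by
              rw [← hedge, pow_add, pow_add]
              ring
            rw [e1]
            have e2 : ρ ^ ((mgVerts β).ncard + (mgVerts (fun e => α e - β e)).ncard)
                ≤ ρ ^ ((mgVerts α).ncard + 1) :=
              pow_le_pow_of_le_one hρ0.le hρ1.le hcard
            have e3 : (ρ:ℝ) ^ ((mgVerts α).ncard + 1) = ρ ^ ((mgVerts α).ncard) * ρ :=
              pow_succ ρ _
            rw [← e3]
            exact mul_le_mul_of_nonneg_left e2 (by positivity)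
          calc κ β * (∏ e, ((α e).choose (β e) : ℝ)) * momX lam ρ (fun e => α e - β e)
              ≤ momX lam ρ β * (∏ e, ((α e).choose (β e) : ℝ)) *
                  momX lam ρ (fun e => α e - β e) := by
                apply mul_le_mul_of_nonneg_right _ (hmomnn _)
                exact mul_le_mul_of_nonneg_right hhi hBnn
            _ = (∏ e, ((α e).choose (β e) : ℝ)) *
                  (momX lam ρ β * momX lam ρ (fun e => α e - β e)) := by ring
            _ ≤ (∏ e, ((α e).choose (β e) : ℝ)) *
                  (lam ^ mgEdges α * (ρ ^ ((mgVerts α).ncard) * ρ)) :=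
                mul_le_mul_of_nonneg_left hmm hBnn
      · have hz : κ β = 0 := vanish hκ (mgEdges β) β le_rfl hβ0 hc
        rw [hz]
        constructor
        · simp
        · have : (0:ℝ) * (∏ e, ((α e).choose (β e) : ℝ)) *
              momX lam ρ (fun e => α e - β e) = 0 := by ring
          rw [this]
          positivity
    -- the binomial sum
    have hBsum : ∑ β ∈ (Finset.Icc 0 α).erase α, (∏ e, ((α e).choose (β e) : ℝ))
        = 2 ^ mgEdges α - 1 := by
      have hNat : (∑ β ∈ (Finset.Icc 0 α).erase α, ∏ e, (α e).choose (β e)) + 1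
          = 2 ^ mgEdges α := by
        have h5 := Finset.sum_erase_add (Finset.Icc 0 α)
          (fun β => ∏ e, (α e).choose (β e)) (by simp : α ∈ Finset.Icc 0 α)
        rw [sum_choose α] at h5
        simpa using h5
      have h6 := congrArg (fun m : ℕ => (m : ℝ)) hNat
      push_cast at h6
      linarith
    -- total sum bound
    have hsum_nonneg : 0 ≤ ∑ β ∈ (Finset.Icc 0 α).erase α,
        κ β * (∏ e, ((α e).choose (β e) : ℝ)) * momX lam ρ (fun e => α e - β e) := by
      apply Finset.sum_nonneg
      intro β hβ
      by_cases hβ0 : β = 0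
      · subst hβ0
        rw [hT0]
        have := hmomnn α
        positivity
      · exact (hTbound β hβ hβ0).1
    have hsum_upper : ∑ β ∈ (Finset.Icc 0 α).erase α,
        κ β * (∏ e, ((α e).choose (β e) : ℝ)) * momX lam ρ (fun e => α e - β e)
        ≤ (1/2) * momX lam ρ α := by
      rw [← Finset.sum_erase_add _ _ h0mem, hT0]
      have hstep1 : ∑ β ∈ ((Finset.Icc 0 α).erase α).erase 0,
          κ β * (∏ e, ((α e).choose (β e) : ℝ)) * momX lam ρ (fun e => α e - β e)
          ≤ ∑ β ∈ ((Finset.Icc 0 α).erase α).erase 0,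
              (∏ e, ((α e).choose (β e) : ℝ)) *
                (lam ^ mgEdges α * (ρ ^ ((mgVerts α).ncard) * ρ)) := by
        apply Finset.sum_le_sum
        intro β hβ
        rw [Finset.mem_erase] at hβ
        exact (hTbound β hβ.2 hβ.1).2
      have hstep2 : ∑ β ∈ ((Finset.Icc 0 α).erase α).erase 0,
          (∏ e, ((α e).choose (β e) : ℝ)) *
            (lam ^ mgEdges α * (ρ ^ ((mgVerts α).ncard) * ρ))
          ≤ (2 ^ mgEdges α - 1) * (lam ^ mgEdges α * (ρ ^ ((mgVerts α).ncard) * ρ)) := by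
        rw [← Finset.sum_mul, ← hBsum]
        apply mul_le_mul_of_nonneg_right _ (by positivity)
        apply Finset.sum_le_sum_of_subset_of_nonneg (Finset.erase_subset _ _)
        intro β _ _
        positivity
      have hfin : (2 ^ mgEdges α - 1) * (lam ^ mgEdges α * (ρ ^ ((mgVerts α).ncard) * ρ))
          + ρ * momX lam ρ α ≤ (1/2) * momX lam ρ α := by
        have hid : (2 ^ mgEdges α - 1) * (lam ^ mgEdges α * (ρ ^ ((mgVerts α).ncard) * ρ))
            + ρ * momX lam ρ α = momX lam ρ α * (ρ * 2 ^ mgEdges α) := by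
          unfold momX
          ring
        rw [hid]
        calc momX lam ρ α * (ρ * 2 ^ mgEdges α) ≤ momX lam ρ α * (1/2) :=
              mul_le_mul_of_nonneg_left hρ2 (hmomnn α)
          _ = (1/2) * momX lam ρ α := by ring
      linarith
    -- conclusion
    have hmm2 : momxX lam ρ v1 α = momX lam ρ α := by
      unfold momxX momX
      rw [Set.insert_eq_self.2 hv1]
    have hrec := hκ α
    rw [hmm2] at hrec
    constructor
    · rw [hrec]
      linarith
    · rw [hrec]
      linarith

end KappaAux

/-- **Lemma E.1 (sharp two-sided bound on small cumulants).** Suppose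
`λ ≤ √(r/(e·ρ²·n))` for some `0 < r < 1`. If `α` is connected, spans vertex `1`,
and `1 ≤ |α| ≤ log₂(1/ρ) − 1`, then
`(1/2)·λ^{|α|}·ρ^{|V(α)|} ≤ κ_α ≤ λ^{|α|}·ρ^{|V(α)|}`. -/
theorem kappa_sharp_bound {n : ℕ} (hn : 0 < n) (lam ρ r : ℝ)
    (hlam0 : 0 ≤ lam) (hρ0 : 0 < ρ) (hρ1 : ρ < 1) (hr0 : 0 < r) (hr1 : r < 1)
    (hlam : lam ≤ Real.sqrt (r / (Real.exp 1 * ρ ^ 2 * n)))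
    (κ : (Sym2 (Fin n) → ℕ) → ℝ)
    (hκ : KappaRec lam ρ (⟨0, hn⟩ : Fin n) κ)
    (α : Sym2 (Fin n) → ℕ)
    (hconn : mgConnected α)
    (hv1 : (⟨0, hn⟩ : Fin n) ∈ mgVerts α)
    (hd1 : 1 ≤ mgEdges α)
    (hd2 : (mgEdges α : ℝ) ≤ Real.logb 2 (1 / ρ) - 1) :
    (1 / 2) * lam ^ mgEdges α * ρ ^ (mgVerts α).ncard ≤ κ α ∧
    κ α ≤ lam ^ mgEdges α * ρ ^ (mgVerts α).ncard := by
  have h := KappaAux.main_bound hκ hlam0 hρ0 hρ1 (mgEdges α) α le_rfl hconn hv1 hd1 hd2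
  unfold momX at h
  constructor
  · calc (1 / 2) * lam ^ mgEdges α * ρ ^ (mgVerts α).ncard
        = (1/2) * (lam ^ mgEdges α * ρ ^ (mgVerts α).ncard) := by ring
      _ ≤ κ α := h.1
  · exact h.2
end
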